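/- arXiv:0911.4365 — 5 statements merged into one kernel-verified Lean document; each statement's English description precedes it below -/
import Mathlib

section
/- Let A : (0,∞) → (0,∞) be continuous with ∫_0^1 A(t) dt < ∞, and let Θ : (0,1] → ℝ be twice differentiable with Θ''(t) = A(t)Θ(t), Θ(t) > 0 and Θ'(t) < 0 for all t ∈ (0,1]. Set L := 1 + Θ(1)/|Θ'(1)|. Then: (i) Θ(t) ≤ Θ(1) + |Θ'(t)| and Θ(t) ≤ L|Θ'(t)| for all t ∈ (0,1]; (ii) |log|Θ'(t)| − log|Θ'(s)|| ≤ L ∫_t^s A(u) du for all 0 < t ≤ s ≤ 1, so Θ' is bounded on (0,1]; (iii) the limits Θ(0+) := lim_{t→0+} Θ(t) and Θ'(0+) := lim_{t→0+} Θ'(t) exist and are finite, and the extension of Θ to [0,1] obtained by setting Θ(0) := Θ(0+) is differentiable at 0 with derivative Θ'(0+). -/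
open MeasureTheory Filter Set Topology

theorem estimates_near_zero_for_decreasing_solution
    (A : ℝ → ℝ) (hAc : ContinuousOn A (Set.Ioi 0)) (hApos : ∀ t > (0:ℝ), 0 < A t)
    (hAint : MeasureTheory.IntegrableOn A (Set.Ioc 0 1))
    (Θ Θ' : ℝ → ℝ)
    (hode : ∀ t ∈ Set.Ioc (0:ℝ) 1,
      HasDerivWithinAt Θ (Θ' t) (Set.Ioc 0 1) t ∧
      HasDerivWithinAt Θ' (A t * Θ t) (Set.Ioc 0 1) t)
    (hpos : ∀ t ∈ Set.Ioc (0:ℝ) 1, 0 < Θ t)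
    (hneg : ∀ t ∈ Set.Ioc (0:ℝ) 1, Θ' t < 0)
    (L : ℝ) (hL : L = 1 + Θ 1 / |Θ' 1|) :
    (∀ t ∈ Set.Ioc (0:ℝ) 1, Θ t ≤ Θ 1 + |Θ' t| ∧ Θ t ≤ L * |Θ' t|) ∧
    (∀ t s : ℝ, 0 < t → t ≤ s → s ≤ 1 →
      abs (Real.log |Θ' t| - Real.log |Θ' s|) ≤ L * ∫ u in t..s, A u) ∧
    (∃ M : ℝ, ∀ t ∈ Set.Ioc (0:ℝ) 1, |Θ' t| ≤ M) ∧
    (∃ l l' : ℝ,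
      Filter.Tendsto Θ (nhdsWithin 0 (Set.Ioi 0)) (nhds l) ∧
      Filter.Tendsto Θ' (nhdsWithin 0 (Set.Ioi 0)) (nhds l') ∧
      HasDerivWithinAt (fun t => if t = 0 then l else Θ t) l' (Set.Icc 0 1) 0) := by
  have h01 : (1:ℝ) ∈ Set.Ioc (0:ℝ) 1 := ⟨one_pos, le_refl 1⟩
  have hΘcont : ContinuousOn Θ (Set.Ioc 0 1) := fun t ht => ((hode t ht).1).continuousWithinAt
  have hΘ'cont : ContinuousOn Θ' (Set.Ioc 0 1) := fun t ht => ((hode t ht).2).continuousWithinAt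
  have hnhds : ∀ {x : ℝ}, x ∈ Set.Ioo (0:ℝ) 1 → Set.Ioc (0:ℝ) 1 ∈ 𝓝 x :=
    fun hx => Ioc_mem_nhds hx.1 hx.2
  have hD1 : ∀ x ∈ Set.Ioo (0:ℝ) 1, HasDerivAt Θ (Θ' x) x :=
    fun x hx => ((hode x (Ioo_subset_Ioc_self hx)).1).hasDerivAt (hnhds hx)
  have hD2 : ∀ x ∈ Set.Ioo (0:ℝ) 1, HasDerivAt Θ' (A x * Θ x) x :=
    fun x hx => ((hode x (Ioo_subset_Ioc_self hx)).2).hasDerivAt (hnhds hx)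
  have hΘ'mono : MonotoneOn Θ' (Set.Ioc 0 1) := by
    apply monotoneOn_of_deriv_nonneg (convex_Ioc 0 1) hΘ'cont
    · intro x hx
      rw [interior_Ioc] at hx
      exact (hD2 x hx).differentiableAt.differentiableWithinAt
    · intro x hx
      rw [interior_Ioc] at hx
      rw [(hD2 x hx).deriv]
      exact le_of_lt (mul_pos (hApos x hx.1) (hpos x (Ioo_subset_Ioc_self hx)))
  have hΘ'le : ∀ t ∈ Set.Ioc (0:ℝ) 1, Θ' t ≤ Θ' 1 := fun t ht => hΘ'mono ht h01 ht.2
  have hΘ'1neg : Θ' 1 < 0 := hneg 1 h01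
  have hLpos : 0 < L := by
    rw [hL]
    have := div_nonneg (hpos 1 h01).le (abs_nonneg (Θ' 1))
    linarith
  -- Part (i)
  have key1 : ∀ t ∈ Set.Ioc (0:ℝ) 1, Θ t ≤ Θ 1 + |Θ' t| := by
    intro t ht
    have habs : |Θ' t| = -Θ' t := abs_of_neg (hneg t ht)
    have hsub : Set.Icc t 1 ⊆ Set.Ioc (0:ℝ) 1 := fun x hx => ⟨lt_of_lt_of_le ht.1 hx.1, hx.2⟩
    have hmono : MonotoneOn (fun u => Θ u - Θ' t * u) (Set.Icc t 1) := by
      apply monotoneOn_of_deriv_nonneg (convex_Icc t 1)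
      · exact (hΘcont.mono hsub).sub (continuousOn_const.mul continuousOn_id)
      · intro x hx
        rw [interior_Icc] at hx
        have hx' : x ∈ Set.Ioo (0:ℝ) 1 := ⟨lt_of_lt_of_le ht.1 hx.1.le, hx.2⟩
        exact ((hD1 x hx').sub ((hasDerivAt_id x).const_mul (Θ' t))).differentiableAt.differentiableWithinAt
      · intro x hx
        rw [interior_Icc] at hx
        have hx' : x ∈ Set.Ioo (0:ℝ) 1 := ⟨lt_of_lt_of_le ht.1 hx.1.le, hx.2⟩
        have hd : HasDerivAt (fun u => Θ u - Θ' t * u) (Θ' x - Θ' t) x := by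
          exact ((hD1 x hx').sub ((hasDerivAt_id' x).const_mul (Θ' t))).congr_deriv (by ring)
        rw [hd.deriv]
        have : Θ' t ≤ Θ' x := hΘ'mono ht (Ioo_subset_Ioc_self hx') hx.1.le
        linarith
    have h2 := hmono ⟨le_refl t, ht.2⟩ ⟨ht.2, le_refl 1⟩ ht.2
    simp only at h2
    rw [habs]
    nlinarith [hneg t ht, ht.1]
  have key1b : ∀ t ∈ Set.Ioc (0:ℝ) 1, Θ t ≤ L * |Θ' t| := by
    intro t ht
    have h1 : |Θ' 1| ≤ |Θ' t| := by
      rw [abs_of_neg (hneg t ht), abs_of_neg hΘ'1neg]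
      linarith [hΘ'le t ht]
    have h2 : 0 < |Θ' 1| := abs_pos.mpr hΘ'1neg.ne
    have h3 : 0 < Θ 1 := hpos 1 h01
    rw [hL]
    have h4 : Θ 1 = Θ 1 / |Θ' 1| * |Θ' 1| := (div_mul_cancel₀ _ h2.ne').symm
    have h5 : 0 ≤ Θ 1 / |Θ' 1| := div_nonneg h3.le h2.le
    calc Θ t ≤ Θ 1 + |Θ' t| := key1 t ht
      _ ≤ Θ 1 / |Θ' 1| * |Θ' t| + |Θ' t| := by nlinarith
      _ = (1 + Θ 1 / |Θ' 1|) * |Θ' t| := by ring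
  -- Part (ii)
  have hF : ∀ x ∈ Set.Ioo (0:ℝ) 1,
      HasDerivAt (fun u => Real.log (-Θ' u)) (A x * Θ x / Θ' x) x := by
    intro x hx
    have h1 : HasDerivAt (fun u => -Θ' u) (-(A x * Θ x)) x := (hD2 x hx).neg
    have h2 : -Θ' x ≠ 0 := (neg_pos.mpr (hneg x (Ioo_subset_Ioc_self hx))).ne'
    have := h1.log h2
    simpa [neg_div_neg_eq] using this
  have key2 : ∀ t s : ℝ, 0 < t → t ≤ s → s ≤ 1 →
      abs (Real.log |Θ' t| - Real.log |Θ' s|) ≤ L * ∫ u in t..s, A u := by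
    intro t s ht hts hs1
    have hts' : t ∈ Set.Ioc (0:ℝ) 1 := ⟨ht, hts.trans hs1⟩
    have hss' : s ∈ Set.Ioc (0:ℝ) 1 := ⟨ht.trans_le hts, hs1⟩
    have hsub2 : Set.Icc t s ⊆ Set.Ioc (0:ℝ) 1 :=
      fun x hx => ⟨lt_of_lt_of_le ht hx.1, hx.2.trans hs1⟩
    have hφcont : ContinuousOn (fun u => A u * Θ u / Θ' u) (Set.Icc t s) :=
      (((hAc.mono (fun x hx => lt_of_lt_of_le ht (hx : x ∈ Set.Icc t s).1)).mul
        (hΘcont.mono hsub2)).div (hΘ'cont.mono hsub2)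
        (fun x hx => (hneg x (hsub2 hx)).ne))
    have hφint : IntervalIntegrable (fun u => A u * Θ u / Θ' u) volume t s :=
      hφcont.intervalIntegrable_of_Icc hts
    have hFcont : ContinuousOn (fun u => Real.log (-Θ' u)) (Set.Icc t s) := by
      apply ContinuousOn.log ((hΘ'cont.mono hsub2).neg)
      exact fun x hx => (neg_pos.mpr (hneg x (hsub2 hx))).ne'
    have hFTC : ∫ u in t..s, A u * Θ u / Θ' u = Real.log (-Θ' s) - Real.log (-Θ' t) := by
      apply intervalIntegral.integral_eq_sub_of_hasDeriv_right_of_le hts hFcont _ hφint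
      intro x hx
      exact (hF x ⟨ht.trans hx.1, lt_of_lt_of_le hx.2 hs1⟩).hasDerivWithinAt
    have hAint' : IntervalIntegrable A volume t s :=
      (intervalIntegrable_iff_integrableOn_Ioc_of_le hts).mpr
        (hAint.mono_set (Ioc_subset_Ioc ht.le hs1))
    have hbound : ∀ x ∈ Set.Icc t s, -(L * A x) ≤ A x * Θ x / Θ' x := by
      intro x hx
      have hx' := hsub2 hx
      have h1 : Θ x ≤ L * (-Θ' x) := by
        have h := key1b x hx'
        rwa [abs_of_neg (hneg x hx')] at h
      have hA := hApos x hx'.1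
      rw [le_div_iff_of_neg (hneg x hx')]
      nlinarith [mul_le_mul_of_nonneg_left h1 hA.le]
    have hφle0 : ∀ x ∈ Set.Icc t s, A x * Θ x / Θ' x ≤ (0:ℝ) := by
      intro x hx
      have hx' := hsub2 hx
      exact div_nonpos_of_nonneg_of_nonpos
        (mul_nonneg (hApos x hx'.1).le (hpos x hx').le) (hneg x hx').le
    have hIlow : -(L * ∫ u in t..s, A u) ≤ ∫ u in t..s, A u * Θ u / Θ' u := by
      have h := intervalIntegral.integral_mono_on hts ((hAint'.const_mul L).neg) hφint hbound
      simpa [intervalIntegral.integral_neg, intervalIntegral.integral_const_mul] using h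
    have hIhigh : (∫ u in t..s, A u * Θ u / Θ' u) ≤ 0 := by
      have h := intervalIntegral.integral_mono_on hts hφint intervalIntegrable_const hφle0
      simpa using h
    have hInonneg : 0 ≤ ∫ u in t..s, A u :=
      intervalIntegral.integral_nonneg hts (fun u hu => (hApos u (lt_of_lt_of_le ht hu.1)).le)
    rw [abs_of_neg (hneg t hts'), abs_of_neg (hneg s hss'), abs_sub_comm, abs_le]
    constructor
    · rw [← hFTC]
      exact hIlow
    · rw [← hFTC]
      exact hIhigh.trans (mul_nonneg hLpos.le hInonneg)
  -- boundedness of Θ'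
  set C : ℝ := ∫ u in Set.Ioc (0:ℝ) 1, A u with hCdef
  have hC : ∀ t ∈ Set.Ioc (0:ℝ) 1, (∫ u in t..(1:ℝ), A u) ≤ C := by
    intro t ht
    rw [intervalIntegral.integral_of_le ht.2]
    apply setIntegral_mono_set hAint
    · exact (ae_restrict_iff' measurableSet_Ioc).mpr (ae_of_all _ fun x hx => (hApos x hx.1).le)
    · exact HasSubset.Subset.eventuallyLE (Ioc_subset_Ioc_left ht.1.le)
  set M : ℝ := Real.exp (Real.log (-Θ' 1) + L * C) with hMdef
  have hM : ∀ t ∈ Set.Ioc (0:ℝ) 1, |Θ' t| ≤ M := by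
    intro t ht
    have h1 := key2 t 1 ht.1 ht.2 le_rfl
    have h2 : Real.log |Θ' t| - Real.log |Θ' 1| ≤ L * C := by
      have := (abs_le.mp h1).2
      have h3 : L * ∫ u in t..(1:ℝ), A u ≤ L * C :=
        mul_le_mul_of_nonneg_left (hC t ht) hLpos.le
      linarith
    have habs : |Θ' t| = -Θ' t := abs_of_neg (hneg t ht)
    have habs1 : |Θ' 1| = -Θ' 1 := abs_of_neg hΘ'1neg
    have hpos' : (0:ℝ) < -Θ' t := neg_pos.mpr (hneg t ht)
    rw [habs, habs1] at h2
    rw [habs, hMdef]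
    calc -Θ' t = Real.exp (Real.log (-Θ' t)) := (Real.exp_log hpos').symm
      _ ≤ Real.exp (Real.log (-Θ' 1) + L * C) := Real.exp_le_exp.mpr (by linarith)
  -- limits
  have hΘanti : AntitoneOn Θ (Set.Ioc 0 1) := by
    apply antitoneOn_of_deriv_nonpos (convex_Ioc 0 1) hΘcont
    · intro x hx
      rw [interior_Ioc] at hx
      exact (hD1 x hx).differentiableAt.differentiableWithinAt
    · intro x hx
      rw [interior_Ioc] at hx
      rw [(hD1 x hx).deriv]
      exact (hneg x (Ioo_subset_Ioc_self hx)).le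
  have hne : (Set.Ioo (0:ℝ) 1).Nonempty := ⟨1/2, by norm_num⟩
  have hbddb : BddBelow (Θ' '' Set.Ioo (0:ℝ) 1) := by
    refine ⟨-M, ?_⟩
    rintro y ⟨x, hx, rfl⟩
    have := hM x (Ioo_subset_Ioc_self hx)
    rw [abs_of_neg (hneg x (Ioo_subset_Ioc_self hx))] at this
    linarith
  have hbdda : BddAbove (Θ '' Set.Ioo (0:ℝ) 1) := by
    refine ⟨Θ 1 + M, ?_⟩
    rintro y ⟨x, hx, rfl⟩
    have h1 := key1 x (Ioo_subset_Ioc_self hx)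
    have h2 := hM x (Ioo_subset_Ioc_self hx)
    linarith
  have hl'tend : Tendsto Θ' (𝓝[>] (0:ℝ)) (𝓝 (sInf (Θ' '' Set.Ioo (0:ℝ) 1))) :=
    (hΘ'mono.mono Ioo_subset_Ioc_self).tendsto_nhdsWithin_Ioo_right hne hbddb
  have hltend : Tendsto Θ (𝓝[>] (0:ℝ)) (𝓝 (sSup (Θ '' Set.Ioo (0:ℝ) 1))) :=
    (hΘanti.mono Ioo_subset_Ioc_self).tendsto_nhdsWithin_Ioo_right hne hbdda
  set l : ℝ := sSup (Θ '' Set.Ioo (0:ℝ) 1) with hldef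
  set l' : ℝ := sInf (Θ' '' Set.Ioo (0:ℝ) 1) with hl'def
  -- slope convergence
  have hslope : Tendsto (fun x => (Θ x - l) / x) (𝓝[>] (0:ℝ)) (𝓝 l') := by
    rw [Metric.tendsto_nhdsWithin_nhds]
    intro ε hε
    obtain ⟨δ, hδ0, hδ⟩ := Metric.tendsto_nhdsWithin_nhds.mp hl'tend (ε/2) (by linarith)
    refine ⟨min δ 1, by positivity, ?_⟩
    intro x hx hxd
    have hx0 : (0:ℝ) < x := hx
    rw [Real.dist_eq, sub_zero, abs_of_pos hx0] at hxd
    have hxδ : x < δ := hxd.trans_le (min_le_left _ _)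
    have hx1 : x ≤ 1 := (hxd.trans_le (min_le_right _ _)).le
    have hxmem : x ∈ Set.Ioc (0:ℝ) 1 := ⟨hx0, hx1⟩
    have hΘ'near : ∀ u ∈ Set.Ioc (0:ℝ) x, |Θ' u - l'| ≤ ε/2 := by
      intro u hu
      have := hδ (hu.1 : u ∈ Set.Ioi (0:ℝ))
        (by rw [Real.dist_eq, sub_zero, abs_of_pos hu.1]; exact lt_of_le_of_lt hu.2 hxδ)
      rw [Real.dist_eq] at this
      exact this.le
    have hsubx : Set.Ioc (0:ℝ) x ⊆ Set.Ioc (0:ℝ) 1 := Ioc_subset_Ioc_right hx1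
    have key : ∀ c : ℝ, (∀ u ∈ Set.Ioc (0:ℝ) x, Θ' u ≤ c) → Θ x - l ≤ c * x := by
      intro c hc
      have hanti : AntitoneOn (fun u => Θ u - c * u) (Set.Ioc 0 x) := by
        apply antitoneOn_of_deriv_nonpos (convex_Ioc 0 x)
        · exact (hΘcont.mono hsubx).sub (continuousOn_const.mul continuousOn_id)
        · intro u hu
          rw [interior_Ioc] at hu
          have hu' : u ∈ Set.Ioo (0:ℝ) 1 := ⟨hu.1, lt_of_lt_of_le hu.2 hx1⟩
          exact ((hD1 u hu').sub ((hasDerivAt_id u).const_mul c)).differentiableAt.differentiableWithinAt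
        · intro u hu
          rw [interior_Ioc] at hu
          have hu' : u ∈ Set.Ioo (0:ℝ) 1 := ⟨hu.1, lt_of_lt_of_le hu.2 hx1⟩
          have hd : HasDerivAt (fun v => Θ v - c * v) (Θ' u - c) u := by
            exact ((hD1 u hu').sub ((hasDerivAt_id' u).const_mul c)).congr_deriv (by ring)
          rw [hd.deriv]
          have := hc u ⟨hu.1, hu.2.le⟩
          linarith
      have hev : ∀ᶠ u in 𝓝[>] (0:ℝ), Θ x - c * x ≤ Θ u - c * u := by
        filter_upwards [Ioc_mem_nhdsGT_of_mem ⟨le_refl (0:ℝ), hx0⟩] with u hu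
        exact hanti hu ⟨hx0, le_refl x⟩ hu.2
      have hgt : Tendsto (fun u => Θ u - c * u) (𝓝[>] (0:ℝ)) (𝓝 (l - c * 0)) :=
        hltend.sub (((continuous_const.mul continuous_id).tendsto 0).mono_left nhdsWithin_le_nhds)
      have := ge_of_tendsto hgt hev
      simp only [mul_zero, sub_zero] at this
      linarith
    have key' : ∀ c : ℝ, (∀ u ∈ Set.Ioc (0:ℝ) x, c ≤ Θ' u) → c * x ≤ Θ x - l := by
      intro c hc
      have hmono : MonotoneOn (fun u => Θ u - c * u) (Set.Ioc 0 x) := by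
        apply monotoneOn_of_deriv_nonneg (convex_Ioc 0 x)
        · exact (hΘcont.mono hsubx).sub (continuousOn_const.mul continuousOn_id)
        · intro u hu
          rw [interior_Ioc] at hu
          have hu' : u ∈ Set.Ioo (0:ℝ) 1 := ⟨hu.1, lt_of_lt_of_le hu.2 hx1⟩
          exact ((hD1 u hu').sub ((hasDerivAt_id u).const_mul c)).differentiableAt.differentiableWithinAt
        · intro u hu
          rw [interior_Ioc] at hu
          have hu' : u ∈ Set.Ioo (0:ℝ) 1 := ⟨hu.1, lt_of_lt_of_le hu.2 hx1⟩
          have hd : HasDerivAt (fun v => Θ v - c * v) (Θ' u - c) u := by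
            exact ((hD1 u hu').sub ((hasDerivAt_id' u).const_mul c)).congr_deriv (by ring)
          rw [hd.deriv]
          have := hc u ⟨hu.1, hu.2.le⟩
          linarith
      have hev : ∀ᶠ u in 𝓝[>] (0:ℝ), Θ u - c * u ≤ Θ x - c * x := by
        filter_upwards [Ioc_mem_nhdsGT_of_mem ⟨le_refl (0:ℝ), hx0⟩] with u hu
        exact hmono hu ⟨hx0, le_refl x⟩ hu.2
      have hgt : Tendsto (fun u => Θ u - c * u) (𝓝[>] (0:ℝ)) (𝓝 (l - c * 0)) :=
        hltend.sub (((continuous_const.mul continuous_id).tendsto 0).mono_left nhdsWithin_le_nhds)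
      have := le_of_tendsto hgt hev
      simp only [mul_zero, sub_zero] at this
      linarith
    have hup : Θ x - l ≤ (l' + ε/2) * x :=
      key (l' + ε/2) (fun u hu => by
        have := hΘ'near u hu
        have h := (abs_le.mp this).2
        linarith)
    have hdown : (l' - ε/2) * x ≤ Θ x - l :=
      key' (l' - ε/2) (fun u hu => by
        have := hΘ'near u hu
        have h := (abs_le.mp this).1
        linarith)
    rw [Real.dist_eq]
    have heq : (Θ x - l) / x - l' = (Θ x - l - l' * x) / x := by
      field_simp
    rw [heq, abs_div, abs_of_pos hx0, div_lt_iff₀ hx0]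
    have h1 : |Θ x - l - l' * x| ≤ ε/2 * x := by
      rw [abs_le]
      constructor <;> nlinarith
    nlinarith
  refine ⟨fun t ht => ⟨key1 t ht, key1b t ht⟩, key2, ⟨M, hM⟩, l, l', hltend, hl'tend, ?_⟩
  rw [hasDerivWithinAt_iff_tendsto_slope]
  have hset : Set.Icc (0:ℝ) 1 \ {0} = Set.Ioc (0:ℝ) 1 := by
    ext u
    simp only [Set.mem_diff, Set.mem_Icc, Set.mem_singleton_iff, Set.mem_Ioc]
    constructor
    · rintro ⟨⟨h1, h2⟩, h3⟩
      exact ⟨lt_of_le_of_ne h1 (Ne.symm h3), h2⟩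
    · rintro ⟨h1, h2⟩
      exact ⟨⟨h1.le, h2⟩, h1.ne'⟩
  rw [hset, nhdsWithin_Ioc_eq_nhdsGT one_pos]
  apply hslope.congr'
  filter_upwards [self_mem_nhdsWithin] with u hu
  have hu0 : u ≠ 0 := (hu : (0:ℝ) < u).ne'
  simp [slope_def_field, hu0]
end

section
/- Let A : (0,∞) → (0,∞) be continuous, integrable in a neighborhood of zero but not integrable in a neighborhood of infinity, and let ε > 0. Then the shifted function A_ε : t ↦ A(t + ε) also satisfies these hypotheses, and for all t ≥ 0 one has Φ_{A_ε}(t) = Φ_A(t + ε) / Φ_A(ε). -/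
open MeasureTheory Filter Set

/-- Hypotheses on the coefficient `A` of the Sturm–Liouville equation: continuous and
strictly positive on `(0,∞)`, integrable in a neighborhood of zero, but not integrable
in a neighborhood of infinity. -/
def SLHyp (A : ℝ → ℝ) : Prop :=
  ContinuousOn A (Set.Ioi 0) ∧ (∀ t > (0:ℝ), 0 < A t) ∧
  MeasureTheory.IntegrableOn A (Set.Ioc 0 1) ∧
  (∫⁻ t in Set.Ici (1:ℝ), ENNReal.ofReal (A t)) = ⊤

/-- `Φ` is a bounded continuous function on `[0,∞)` with `Φ 0 = 1`, twice differentiable on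
`(0,∞)` and satisfying the Sturm–Liouville equation `Φ'' = A Φ` there. -/
def IsSL (A Φ : ℝ → ℝ) : Prop :=
  ContinuousOn Φ (Set.Ici 0) ∧
  (∃ M : ℝ, ∀ t ≥ (0:ℝ), |Φ t| ≤ M) ∧
  Φ 0 = 1 ∧
  (∀ t > (0:ℝ), DifferentiableAt ℝ Φ t) ∧
  (∀ t > (0:ℝ), HasDerivAt (deriv Φ) (A t * Φ t) t)

open Topology in
/-- A bounded solution of `h'' = A h` on `(0,∞)` with `h 0 ≤ 0` stays nonpositive. -/
lemma sl_nonpos (A h : ℝ → ℝ) (hApos : ∀ t > (0:ℝ), 0 < A t)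
    (hc : ContinuousOn h (Set.Ici 0)) (M : ℝ) (hM : ∀ t ≥ (0:ℝ), |h t| ≤ M)
    (h0 : h 0 ≤ 0)
    (hd : ∀ t > (0:ℝ), DifferentiableAt ℝ h t)
    (hd2 : ∀ t > (0:ℝ), HasDerivAt (deriv h) (A t * h t) t) :
    ∀ t ≥ (0:ℝ), h t ≤ 0 := by
  by_contra hcon
  push_neg at hcon
  obtain ⟨t0, ht0, hpos⟩ := hcon
  have ht0' : 0 < t0 := by
    rcases ht0.lt_or_eq with h' | h'
    · exact h'
    · exact absurd (h' ▸ h0) (not_le.mpr (h' ▸ hpos))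
  -- the set of nonpositivity points before t0
  have hScl : IsClosed (Icc 0 t0 ∩ h ⁻¹' Iic 0) :=
    (hc.mono Icc_subset_Ici_self).preimage_isClosed_of_isClosed isClosed_Icc isClosed_Iic
  have hS0 : (0:ℝ) ∈ Icc 0 t0 ∩ h ⁻¹' Iic 0 := ⟨⟨le_refl 0, ht0'.le⟩, h0⟩
  have hSbdd : BddAbove (Icc 0 t0 ∩ h ⁻¹' Iic 0) := ⟨t0, fun x hx => hx.1.2⟩
  set s := sSup (Icc 0 t0 ∩ h ⁻¹' Iic 0) with hs
  have hsS : s ∈ Icc 0 t0 ∩ h ⁻¹' Iic 0 := hScl.csSup_mem ⟨0, hS0⟩ hSbdd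
  have hs0 : 0 ≤ s := hsS.1.1
  have hsle : h s ≤ 0 := hsS.2
  have hslt : s < t0 := by
    rcases eq_or_lt_of_le hsS.1.2 with h' | h'
    · exfalso; rw [h'] at hsle; linarith
    · exact h'
  have hpos_after : ∀ t, s < t → t ≤ t0 → 0 < h t := by
    intro t hst htt0
    by_contra hle
    have hmem : t ∈ Icc 0 t0 ∩ h ⁻¹' Iic 0 := ⟨⟨hs0.trans hst.le, htt0⟩, not_lt.mp hle⟩
    exact absurd (le_csSup hSbdd hmem) (not_le.mpr hst)
  -- h s = 0
  have hseq : h s = 0 := by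
    have htends : Tendsto h (𝓝[>] s) (𝓝 (h s)) :=
      (hc.continuousWithinAt (mem_Ici.mpr hs0)).mono_left
        (nhdsWithin_mono s (fun x hx => le_of_lt (lt_of_le_of_lt hs0 hx)))
    have hev : ∀ᶠ x in 𝓝[>] s, 0 ≤ h x := by
      filter_upwards [Ioo_mem_nhdsGT_of_mem ⟨le_rfl, hslt⟩] with x hx
      exact (hpos_after x hx.1 hx.2.le).le
    have : 0 ≤ h s := ge_of_tendsto htends hev
    linarith
  -- strict monotonicity of `deriv h` on intervals where `h > 0`
  have hmono : ∀ T : ℝ, (∀ x ∈ Ioo s T, 0 < h x) → StrictMonoOn (deriv h) (Ioo s T) := by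
    intro T hposT
    apply strictMonoOn_of_deriv_pos (convex_Ioo s T)
    · intro x hx
      exact ((hd2 x (hs0.trans_lt hx.1)).differentiableAt.continuousAt).continuousWithinAt
    · intro x hx
      rw [interior_Ioo] at hx
      rw [(hd2 x (hs0.trans_lt hx.1)).deriv]
      exact mul_pos (hApos x (hs0.trans_lt hx.1)) (hposT x hx)
  -- MVT helper
  have hMVT : ∀ a b : ℝ, s ≤ a → a < b →
      ∃ c ∈ Ioo a b, deriv h c = (h b - h a) / (b - a) := by
    intro a b hsa hab
    exact exists_hasDerivAt_eq_slope h (deriv h) hab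
      (hc.mono (fun x hx => le_trans (hs0.trans hsa) hx.1))
      (fun x hx => (hd x ((hs0.trans hsa).trans_lt hx.1)).hasDerivAt)
  -- h is positive everywhere after s
  have hgt : ∀ t, s < t → 0 < h t := by
    intro t hst
    by_contra hle
    push_neg at hle
    have ht1gt : t0 < t := by
      by_contra hle2
      exact absurd (hpos_after t hst (not_lt.mp hle2)) (not_lt.mpr hle)
    -- first return to nonpositivity after t0
    have hTcl : IsClosed (Ici t0 ∩ h ⁻¹' Iic 0) :=
      (hc.mono (fun x hx => ht0'.le.trans hx)).preimage_isClosed_of_isClosed isClosed_Ici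
        isClosed_Iic
    have hTne : (Ici t0 ∩ h ⁻¹' Iic 0).Nonempty := ⟨t, ht1gt.le, hle⟩
    have hTbdd : BddBelow (Ici t0 ∩ h ⁻¹' Iic 0) := ⟨t0, fun x hx => hx.1⟩
    set u := sInf (Ici t0 ∩ h ⁻¹' Iic 0) with hu
    have huT : u ∈ Ici t0 ∩ h ⁻¹' Iic 0 := hTcl.csInf_mem hTne hTbdd
    have hut0 : t0 < u := by
      rcases eq_or_lt_of_le (mem_Ici.mp huT.1) with h' | h'
      · exfalso; have := huT.2; rw [← h'] at this
        simp only [mem_preimage, mem_Iic] at this; linarith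
      · exact h'
    have hpos_mid : ∀ x ∈ Ioo s u, 0 < h x := by
      rintro x ⟨hx1, hx2⟩
      rcases le_or_gt x t0 with hx3 | hx3
      · exact hpos_after x hx1 hx3
      · by_contra hle3
        have hmem : x ∈ Ici t0 ∩ h ⁻¹' Iic 0 := ⟨hx3.le, not_lt.mp hle3⟩
        exact absurd (csInf_le hTbdd hmem) (not_le.mpr hx2)
    obtain ⟨c1, hc1, he1⟩ := hMVT s t0 le_rfl hslt
    obtain ⟨c2, hc2, he2⟩ := hMVT t0 u hslt.le hut0
    have hc1pos : 0 < deriv h c1 := by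
      rw [he1, hseq, sub_zero]
      exact div_pos hpos (by linarith)
    have hc2neg : deriv h c2 < 0 := by
      rw [he2]
      apply div_neg_of_neg_of_pos _ (by linarith)
      have := huT.2
      simp only [mem_preimage, mem_Iic] at this
      linarith
    have hlt : deriv h c1 < deriv h c2 :=
      hmono u hpos_mid ⟨hc1.1, hc1.2.trans hut0⟩ ⟨hslt.trans hc2.1, hc2.2⟩ (hc1.2.trans hc2.1)
    linarith
  -- now derive unboundedness
  obtain ⟨ξ, hξ, heξ⟩ := hMVT s t0 le_rfl hslt
  set d := deriv h ξ with hdd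
  have hdpos : 0 < d := by
    rw [heξ, hseq, sub_zero]
    exact div_pos hpos (by linarith [hξ.1, hξ.2])
  have hM0 : 0 ≤ M := le_trans (abs_nonneg _) (hM 0 le_rfl)
  set t2 := ξ + (M + 1) / d with ht2
  have hξt2 : ξ < t2 := by
    rw [ht2]
    have : 0 < (M + 1) / d := by positivity
    linarith
  obtain ⟨η, hη, heη⟩ := hMVT ξ t2 hξ.1.le hξt2
  have hmono2 := hmono (t2 + 1) (fun x hx => hgt x hx.1)
  have hlt2 : d < deriv h η :=
    hmono2 ⟨hξ.1, by linarith [hη.2]⟩ ⟨hξ.1.trans hη.1, by linarith [hη.2]⟩ hη.1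
  have ht2val : h t2 - h ξ = deriv h η * (t2 - ξ) := by
    rw [heη, div_mul_cancel₀ _ (sub_pos.mpr hξt2).ne']
  have ht2ξ : t2 - ξ = (M + 1) / d := by rw [ht2]; ring
  have hgrow : M + 1 < h t2 - h ξ := by
    rw [ht2val, ht2ξ]
    calc M + 1 = d * ((M + 1) / d) := by field_simp
    _ < deriv h η * ((M + 1) / d) := by
        apply mul_lt_mul_of_pos_right hlt2
        positivity
  have hhξpos : 0 < h ξ := hgt ξ hξ.1
  have hbound := hM t2 (by linarith [hs0, hξ.1])
  have := abs_le.mp hbound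
  linarith [this.2]

open Topology in
lemma sl_diff_nonpos (A F G : ℝ → ℝ) (hApos : ∀ t > (0:ℝ), 0 < A t)
    (hF : IsSL A F) (hG : IsSL A G) : ∀ t ≥ (0:ℝ), F t - G t ≤ 0 := by
  obtain ⟨hFc, ⟨MF, hMF⟩, hF0, hFd, hFdd⟩ := hF
  obtain ⟨hGc, ⟨MG, hMG⟩, hG0, hGd, hGdd⟩ := hG
  have hder : ∀ t > (0:ℝ), deriv (fun x => F x - G x) t = deriv F t - deriv G t := by
    intro t ht
    exact deriv_sub (hFd t ht) (hGd t ht)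
  apply sl_nonpos A (fun x => F x - G x) hApos (hFc.sub hGc) (MF + MG)
  · intro t ht
    calc |F t - G t| ≤ |F t| + |G t| := abs_sub _ _
    _ ≤ MF + MG := add_le_add (hMF t ht) (hMG t ht)
  · rw [hF0, hG0]; norm_num
  · intro t ht
    exact (hFd t ht).sub (hGd t ht)
  · intro t ht
    have base : HasDerivAt (fun x => deriv F x - deriv G x)
        (A t * F t - A t * G t) t := (hFdd t ht).sub (hGdd t ht)
    have hev : deriv (fun x => F x - G x) =ᶠ[𝓝 t] (fun x => deriv F x - deriv G x) := by
      filter_upwards [isOpen_Ioi.mem_nhds (mem_Ioi.mpr ht)] with x hx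
      exact hder x hx
    have := base.congr_of_eventuallyEq hev
    exact this.congr_deriv (by ring)


open Topology in
lemma sl_unique (A Φ₁ Φ₂ : ℝ → ℝ) (hApos : ∀ t > (0:ℝ), 0 < A t)
    (h1 : IsSL A Φ₁) (h2 : IsSL A Φ₂) : ∀ t ≥ (0:ℝ), Φ₁ t = Φ₂ t := by
  intro t ht
  have hle := sl_diff_nonpos A Φ₁ Φ₂ hApos h1 h2 t ht
  have hge := sl_diff_nonpos A Φ₂ Φ₁ hApos h2 h1 t ht
  linarith

open Topology in
lemma sl_pos (A Φ : ℝ → ℝ) (hAc : ContinuousOn A (Set.Ioi 0))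
    (hApos : ∀ t > (0:ℝ), 0 < A t) (hΦ : IsSL A Φ) : ∀ t ≥ (0:ℝ), 0 < Φ t := by
  obtain ⟨hc, ⟨M, hM⟩, h1, hd, hdd⟩ := hΦ
  -- Step 1 : Φ is nonnegative
  have hnonneg : ∀ t ≥ (0:ℝ), 0 ≤ Φ t := by
    have hder : ∀ t > (0:ℝ), deriv (fun x => -Φ x) t = -deriv Φ t := fun t ht => deriv.neg
    have := sl_nonpos A (fun x => -Φ x) hApos hc.neg M
      (fun t ht => by rw [abs_neg]; exact hM t ht) (by rw [h1]; norm_num)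
      (fun t ht => (hd t ht).neg)
      (fun t ht => by
        have base : HasDerivAt (fun x => -deriv Φ x) (-(A t * Φ t)) t := (hdd t ht).neg
        have hev : deriv (fun x => -Φ x) =ᶠ[𝓝 t] (fun x => -deriv Φ x) := by
          filter_upwards [isOpen_Ioi.mem_nhds (mem_Ioi.mpr ht)] with x hx
          exact hder x hx
        have := base.congr_of_eventuallyEq hev
        exact this.congr_deriv (by ring))
    intro t ht
    have h2 := this t ht
    linarith
  -- Step 2 : Φ is positive
  by_contra hcon
  push_neg at hcon
  obtain ⟨ts, hts, htsle⟩ := hcon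
  have htseq : Φ ts = 0 := le_antisymm htsle (hnonneg ts hts)
  have hts0 : 0 < ts := by
    rcases hts.lt_or_eq with h' | h'
    · exact h'
    · exfalso; rw [← h', h1] at htseq; norm_num at htseq
  -- the derivative vanishes at the interior minimum ts
  have hdts : deriv Φ ts = 0 := by
    apply IsLocalMin.deriv_eq_zero
    rw [IsLocalMin, IsMinFilter, htseq]
    filter_upwards [isOpen_Ioi.mem_nhds (mem_Ioi.mpr hts0)] with x hx
    exact hnonneg x (le_of_lt hx)
  -- Φ vanishes on (0, ts] by backward ODE uniqueness
  have hzero : ∀ x, 0 < x → x ≤ ts → Φ x = 0 := by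
    intro x hx hxts
    rcases eq_or_lt_of_le hxts with h' | h'
    · rw [h', htseq]
    -- bound for A on [x, ts]
    have hsub : Icc x ts ⊆ Ioi 0 := fun y hy => lt_of_lt_of_le hx hy.1
    obtain ⟨C, hC⟩ := isCompact_Icc.exists_bound_of_continuousOn (hAc.mono hsub)
    have hC0 : 0 ≤ C := le_trans (norm_nonneg _) (hC x ⟨le_rfl, hxts⟩)
    -- the clamped coefficient
    set B : ℝ → ℝ := fun y => A (min (max y x) ts) with hB
    have hBeq : ∀ y ∈ Icc x ts, B y = A y := by
      intro y hy
      rw [hB]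
      simp only [max_eq_left hy.1, min_eq_left hy.2]
    have hBbd : ∀ y, |B y| ≤ C := by
      intro y
      have h1' : min (max y x) ts ∈ Icc x ts := by
        constructor
        · exact le_min (le_max_right y x) hxts
        · exact min_le_right _ _
      simpa using hC _ h1'
    -- the vector field
    set v : ℝ → ℝ × ℝ → ℝ × ℝ := fun τ p => (p.2, B τ * p.1) with hv
    set K : NNReal := 1 ⊔ Real.toNNReal C with hK
    have hlip : ∀ τ, LipschitzOnWith K (v τ) univ := by
      intro τ
      have l1 : LipschitzWith 1 (fun p : ℝ × ℝ => p.2) := LipschitzWith.prod_snd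
      have l2 : LipschitzWith (Real.toNNReal C) (fun p : ℝ × ℝ => B τ * p.1) := by
        apply LipschitzWith.of_dist_le_mul
        intro p q
        have hd1 : dist p.1 q.1 ≤ dist p q := by rw [Prod.dist_eq]; exact le_max_left _ _
        rw [Real.dist_eq]
        have : B τ * p.1 - B τ * q.1 = B τ * (p.1 - q.1) := by ring
        rw [this, abs_mul]
        calc |B τ| * |p.1 - q.1| ≤ C * |p.1 - q.1| :=
              mul_le_mul_of_nonneg_right (hBbd τ) (abs_nonneg _)
        _ ≤ C * dist p q := by
              apply mul_le_mul_of_nonneg_left _ hC0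
              rw [← Real.dist_eq]
              exact hd1
        _ = (Real.toNNReal C : ℝ) * dist p q := by rw [Real.coe_toNNReal _ hC0]
      have hpr := l1.prodMk l2
      rw [hK]
      exact (hpr.weaken (le_refl _)).lipschitzOnWith
    -- the two solutions
    set f : ℝ → ℝ × ℝ := fun τ => (Φ τ, deriv Φ τ) with hf
    have hfc : ContinuousOn f (Icc x ts) := by
      apply ContinuousOn.prodMk
      · intro τ hτ
        exact ((hd τ (hsub hτ)).continuousAt).continuousWithinAt
      · intro τ hτ
        exact (((hdd τ (hsub hτ)).differentiableAt).continuousAt).continuousWithinAt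
    have hfd : ∀ τ ∈ Ioc x ts, HasDerivWithinAt f (v τ (f τ)) (Iic τ) τ := by
      intro τ hτ
      have hτ0 : 0 < τ := hx.trans hτ.1
      have h1' : HasDerivAt f (deriv Φ τ, A τ * Φ τ) τ :=
        ((hd τ hτ0).hasDerivAt).prodMk (hdd τ hτ0)
      have heqv : v τ (f τ) = (deriv Φ τ, A τ * Φ τ) := by
        rw [hv, hf]
        simp only []
        rw [hBeq τ ⟨hτ.1.le, hτ.2⟩]
      rw [heqv]
      exact h1'.hasDerivWithinAt
    have hgd : ∀ τ ∈ Ioc x ts, HasDerivWithinAt (fun _ : ℝ => ((0:ℝ), (0:ℝ)))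
        (v τ ((0:ℝ), (0:ℝ))) (Iic τ) τ := by
      intro τ hτ
      have heqv : v τ ((0:ℝ), (0:ℝ)) = ((0:ℝ), (0:ℝ)) := by rw [hv]; simp
      rw [heqv]
      exact hasDerivWithinAt_const τ _ _
    have hend : f ts = ((0:ℝ), (0:ℝ)) := by rw [hf]; simp [htseq, hdts]
    have heqon := ODE_solution_unique_of_mem_Icc_left (fun τ _ => hlip τ) hfc hfd (fun τ _ => mem_univ _)
      continuousOn_const hgd (fun τ _ => mem_univ _) hend
    have := heqon ⟨le_rfl, hxts⟩
    rw [hf] at this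
    exact congrArg Prod.fst this
  -- contradiction with Φ 0 = 1
  have htend1 : Tendsto Φ (𝓝[>] (0:ℝ)) (𝓝 1) := by
    have := (hc.continuousWithinAt (self_mem_Ici)).mono_left
      (nhdsWithin_mono (0:ℝ) Ioi_subset_Ici_self)
    rwa [h1] at this
  have htend0 : Tendsto Φ (𝓝[>] (0:ℝ)) (𝓝 0) := by
    apply Tendsto.congr' _ tendsto_const_nhds
    filter_upwards [Ioo_mem_nhdsGT_of_mem ⟨le_rfl, hts0⟩] with y hy
    exact (hzero y hy.1 hy.2.le).symm
  exact absurd (tendsto_nhds_unique htend1 htend0) (by norm_num)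

open Topology in
lemma sl_shift (A Φ : ℝ → ℝ) (hΦ : IsSL A Φ) (ε : ℝ) (hε : 0 < ε) (hεpos : 0 < Φ ε) :
    IsSL (fun t => A (t + ε)) (fun t => Φ (t + ε) / Φ ε) := by
  obtain ⟨hc, ⟨M, hM⟩, h1, hd, hdd⟩ := hΦ
  have key1 : ∀ t > (0:ℝ), HasDerivAt (fun x => Φ (x + ε) / Φ ε) (deriv Φ (t + ε) / Φ ε) t := by
    intro t ht
    have hsh : HasDerivAt (fun x : ℝ => x + ε) 1 t := (hasDerivAt_id t).add_const ε
    have h0 : HasDerivAt (fun x => Φ (x + ε)) (deriv Φ (t + ε)) t := by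
      have := ((hd (t + ε) (by linarith)).hasDerivAt).comp t hsh
      simpa [Function.comp_def] using this
    exact h0.div_const _
  have hderΦ2 : ∀ t > (0:ℝ), deriv (fun x => Φ (x + ε) / Φ ε) t = deriv Φ (t + ε) / Φ ε :=
    fun t ht => (key1 t ht).deriv
  refine ⟨?_, ⟨M / Φ ε, ?_⟩, ?_, fun t ht => (key1 t ht).differentiableAt, ?_⟩
  · exact (hc.comp (Continuous.continuousOn (by continuity))
      (fun t (ht : t ∈ Ici 0) => mem_Ici.mpr (by have := mem_Ici.mp ht; linarith))).div_const _
  · intro t ht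
    rw [abs_div, abs_of_pos hεpos]
    gcongr
    exact hM (t + ε) (by linarith)
  · simp only [zero_add]
    exact div_self hεpos.ne'
  · intro t ht
    have hsh : HasDerivAt (fun x : ℝ => x + ε) 1 t := (hasDerivAt_id t).add_const ε
    have base0 : HasDerivAt (fun x => deriv Φ (x + ε)) (A (t + ε) * Φ (t + ε)) t := by
      have := (hdd (t + ε) (by linarith)).comp t hsh
      simpa [Function.comp_def] using this
    have base : HasDerivAt (fun x => deriv Φ (x + ε) / Φ ε)
        (A (t + ε) * Φ (t + ε) / Φ ε) t := base0.div_const _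
    have hev : deriv (fun x => Φ (x + ε) / Φ ε) =ᶠ[𝓝 t]
        (fun x => deriv Φ (x + ε) / Φ ε) := by
      filter_upwards [isOpen_Ioi.mem_nhds (mem_Ioi.mpr ht)] with x hx
      exact hderΦ2 x hx
    have := base.congr_of_eventuallyEq hev
    exact this.congr_deriv (by ring)

open Topology in
lemma sl_hyp_shift (A : ℝ → ℝ) (hA : SLHyp A) (ε : ℝ) (hε : 0 < ε) : SLHyp (fun t => A (t + ε)) := by
  obtain ⟨hAc, hApos, hAint, hAtop⟩ := hA
  refine ⟨?_, ?_, ?_, ?_⟩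
  · exact hAc.comp (Continuous.continuousOn (by continuity))
      (fun t ht => mem_Ioi.mpr (by have := mem_Ioi.mp ht; linarith))
  · intro t ht
    exact hApos (t + ε) (by linarith)
  · have c1 : ContinuousOn (fun t => A (t + ε)) (Icc 0 1) :=
      hAc.comp (Continuous.continuousOn (by continuity))
        (fun t ht => mem_Ioi.mpr (by have := ht.1; linarith))
    exact (c1.integrableOn_compact isCompact_Icc).mono_set Ioc_subset_Icc_self
  · -- change of variables
    have hkey : (∫⁻ t in Set.Ici (1:ℝ), ENNReal.ofReal (A (t + ε)))
        = ∫⁻ t in Set.Ici (1 + ε), ENNReal.ofReal (A t) := by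
      rw [← lintegral_indicator measurableSet_Ici, ← lintegral_indicator measurableSet_Ici]
      have hind : ∀ t : ℝ, (Ici (1:ℝ)).indicator (fun u => ENNReal.ofReal (A (u + ε))) t
          = (Ici (1 + ε)).indicator (fun u => ENNReal.ofReal (A u)) (t + ε) := by
        intro t
        by_cases h : (1:ℝ) ≤ t
        · rw [indicator_of_mem (mem_Ici.mpr h), indicator_of_mem (mem_Ici.mpr (by linarith))]
        · rw [indicator_of_notMem (fun hh => h (mem_Ici.mp hh)),
            indicator_of_notMem (fun hh => h (by have := mem_Ici.mp hh; linarith))]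
      simp_rw [hind]
      exact lintegral_add_right_eq_self ((Ici (1 + ε)).indicator fun u => ENNReal.ofReal (A u)) ε
    rw [hkey]
    by_contra hfin
    -- the piece over [1, 1+ε] is finite
    obtain ⟨C, hC⟩ := isCompact_Icc.exists_bound_of_continuousOn
      (hAc.mono (fun y (hy : y ∈ Icc 1 (1+ε)) => mem_Ioi.mpr (by have := hy.1; linarith)))
    have hfin1 : (∫⁻ t in Set.Icc (1:ℝ) (1 + ε), ENNReal.ofReal (A t)) < ⊤ := by
      have hae : ∀ᵐ t ∂(volume.restrict (Icc (1:ℝ) (1 + ε))),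
          ENNReal.ofReal (A t) ≤ ENNReal.ofReal C :=
        ae_restrict_of_forall_mem measurableSet_Icc
          (fun t ht => ENNReal.ofReal_le_ofReal ((le_abs_self _).trans (by simpa using hC t ht)))
      calc (∫⁻ t in Set.Icc (1:ℝ) (1 + ε), ENNReal.ofReal (A t))
          ≤ ∫⁻ _ in Set.Icc (1:ℝ) (1 + ε), ENNReal.ofReal C := lintegral_mono_ae hae
      _ = ENNReal.ofReal C * volume (Icc (1:ℝ) (1 + ε)) := by
          rw [setLIntegral_const]
      _ < ⊤ := ENNReal.mul_lt_top ENNReal.ofReal_lt_top (by rw [Real.volume_Icc]; exact ENNReal.ofReal_lt_top)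
    have hsplit : (∫⁻ t in Set.Ici (1:ℝ), ENNReal.ofReal (A t))
        ≤ (∫⁻ t in Set.Icc (1:ℝ) (1 + ε), ENNReal.ofReal (A t))
          + ∫⁻ t in Set.Ici (1 + ε), ENNReal.ofReal (A t) := by
      refine le_trans (lintegral_mono_set ?_) (lintegral_union_le _ _ _)
      intro y hy
      rcases le_total y (1 + ε) with h | h
      · exact Or.inl ⟨mem_Ici.mp hy, h⟩
      · exact Or.inr (mem_Ici.mpr h)
    rw [hAtop] at hsplit
    have : (∫⁻ t in Set.Icc (1:ℝ) (1 + ε), ENNReal.ofReal (A t))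
        + (∫⁻ t in Set.Ici (1 + ε), ENNReal.ofReal (A t)) < ⊤ :=
      ENNReal.add_lt_top.mpr ⟨hfin1, lt_top_iff_ne_top.mpr hfin⟩
    exact absurd (top_le_iff.mp hsplit) (by
      intro h
      rw [h] at this
      exact absurd this (lt_irrefl _))

theorem shifted_sturm_liouville_solution (A Φ : ℝ → ℝ) (hA : SLHyp A) (hΦ : IsSL A Φ)
    (ε : ℝ) (hε : 0 < ε) :
    SLHyp (fun t => A (t + ε)) ∧
    ∀ Ψ : ℝ → ℝ, IsSL (fun t => A (t + ε)) Ψ →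
      ∀ t ≥ (0:ℝ), Ψ t = Φ (t + ε) / Φ ε := by
  constructor
  · exact sl_hyp_shift A hA ε hε
  · intro Ψ hΨ t ht
    have hεpos : 0 < Φ ε := sl_pos A Φ hA.1 hA.2.1 hΦ ε hε.le
    have hΦ2 : IsSL (fun t => A (t + ε)) (fun t => Φ (t + ε) / Φ ε) :=
      sl_shift A Φ hΦ ε hε hεpos
    have hApos' : ∀ t > (0:ℝ), 0 < (fun t => A (t + ε)) t :=
      fun t ht' => hA.2.1 (t + ε) (by linarith)
    exact sl_unique (fun t => A (t + ε)) Ψ (fun t => Φ (t + ε) / Φ ε) hApos' hΨ hΦ2 t ht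
end

section
/- In the setting of the family (A_λ), there exist λ₀ > 0 and K' > 0 such that for all λ ∈ (0, λ₀] and all t ≥ 0 one has |Φ_{A_λ}'(t)| ≤ K'. -/
open MeasureTheory Filter Set

/-- Key quantитative lemma: if `A` is positive and continuous on `(0,∞)` and dominated on
`(0,2]` by a nonnegative interval-integrable function `D`, then any `IsSL` solution has
derivative (within `[0,∞)`) bounded by `3 + ∫₀² D`. -/
lemma sl_deriv_bound (A Φ D : ℝ → ℝ)
    (hApos : ∀ t > (0:ℝ), 0 < A t) (hAcont : ContinuousOn A (Set.Ioi 0))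
    (hD0 : ∀ s ≥ (0:ℝ), 0 ≤ D s)
    (hDint : IntervalIntegrable D MeasureTheory.volume 0 2)
    (hAD : ∀ s ∈ Set.Ioc (0:ℝ) 2, A s ≤ D s)
    (hΦ : IsSL A Φ) :
    ∀ t ≥ (0:ℝ), |derivWithin Φ (Set.Ici 0) t| ≤ 3 + ∫ s in (0:ℝ)..2, D s := by
  obtain ⟨hcont, ⟨M, hM⟩, h0, hdiff, hode⟩ := hΦ
  set f := deriv Φ with hf
  set I := ∫ s in (0:ℝ)..2, D s with hI
  have hInonneg : 0 ≤ I := intervalIntegral.integral_nonneg (by norm_num)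
    (fun u hu => hD0 u hu.1)
  have hΦd : ∀ t > (0:ℝ), HasDerivAt Φ (f t) t := fun t ht => (hdiff t ht).hasDerivAt
  have hfc : ContinuousOn f (Set.Ioi 0) := fun t ht =>
    ((hode t ht).differentiableAt.continuousAt).continuousWithinAt
  have hΦc' : ContinuousOn Φ (Set.Ioi 0) := hcont.mono (Set.Ioi_subset_Ici le_rfl)
  -- g = Φ * Φ' is monotone on (0,∞)
  set g := fun t => Φ t * f t with hg
  have hgd : ∀ t > (0:ℝ), HasDerivAt g (f t * f t + Φ t * (A t * Φ t)) t :=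
    fun t ht => (hΦd t ht).mul (hode t ht)
  have hgc : ContinuousOn g (Set.Ioi 0) := hΦc'.mul hfc
  have hgmono : MonotoneOn g (Set.Ioi 0) := by
    apply monotoneOn_of_deriv_nonneg (convex_Ioi 0) hgc
    · intro t ht
      rw [interior_Ioi] at ht
      exact ((hgd t ht).differentiableAt.differentiableWithinAt)
    · intro t ht
      rw [interior_Ioi] at ht
      rw [(hgd t ht).deriv]
      have h1 : 0 ≤ f t * f t := mul_self_nonneg _
      have h2 : 0 ≤ Φ t * (A t * Φ t) := by
        have := (hApos t ht).le
        nlinarith [mul_self_nonneg (Φ t)]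
      linarith
  have hMpos : (1:ℝ) ≤ M := by
    have := hM 0 le_rfl
    rwa [h0, abs_one] at this
  -- g ≤ 0 on (0,∞)
  have hgle : ∀ t > (0:ℝ), g t ≤ 0 := by
    intro t₁ ht₁
    by_contra hpos
    push_neg at hpos
    set ε := g t₁ with hε
    -- F = Φ² - 2εt is monotone on [t₁,∞)
    set F := fun t => Φ t * Φ t - 2 * ε * t with hF
    have hFd : ∀ t ∈ Set.Ioi t₁, HasDerivAt F (f t * Φ t + Φ t * f t - 2 * ε) t := by
      intro t ht
      have ht0 : 0 < t := lt_trans ht₁ ht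
      exact ((hΦd t ht0).mul (hΦd t ht0)).sub
        (((hasDerivAt_id t).const_mul (2 * ε)).congr_deriv (by ring))
    have hFmono : MonotoneOn F (Set.Ici t₁) := by
      apply monotoneOn_of_deriv_nonneg (convex_Ici t₁)
      · apply ContinuousOn.sub
        · exact (hΦc'.mono (fun x hx => lt_of_lt_of_le ht₁ hx)).mul
            (hΦc'.mono (fun x hx => lt_of_lt_of_le ht₁ hx))
        · exact (continuous_const.mul continuous_id).continuousOn
      · intro t ht
        rw [interior_Ici] at ht
        exact (hFd t ht).differentiableAt.differentiableWithinAt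
      · intro t ht
        rw [interior_Ici] at ht
        rw [(hFd t ht).deriv]
        have hgt : ε ≤ Φ t * f t :=
          hgmono (Set.mem_Ioi.mpr ht₁) (Set.mem_Ioi.mpr (lt_trans ht₁ ht)) ht.le
        nlinarith [hgt]
    set x := t₁ + (M ^ 2 + 1) / (2 * ε) with hx
    have hxt : t₁ ≤ x := by
      rw [hx]
      have : 0 ≤ (M ^ 2 + 1) / (2 * ε) := by positivity
      linarith
    have hkey : F t₁ ≤ F x := hFmono (Set.mem_Ici.mpr le_rfl) (Set.mem_Ici.mpr hxt) hxt
    have hxval : 2 * ε * x = 2 * ε * t₁ + (M ^ 2 + 1) := by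
      field_simp [hx]
      have hq : 2 * ε * ((M ^ 2 + 1) / (2 * ε)) = M ^ 2 + 1 := by field_simp
      linear_combination (2 * ε) * hx + hq
    have hΦx : |Φ x| ≤ M := hM x (le_trans ht₁.le hxt)
    obtain ⟨h1a, h1b⟩ := abs_le.mp hΦx
    have hkey' : Φ t₁ * Φ t₁ - 2 * ε * t₁ ≤ Φ x * Φ x - 2 * ε * x := hkey
    nlinarith [mul_self_nonneg (Φ t₁), mul_nonneg (sub_nonneg.mpr h1b)
      (by linarith : (0:ℝ) ≤ Φ x + M)]
  -- |Φ| ≤ 1 on [0,∞)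
  have hΦ1 : ∀ t ≥ (0:ℝ), |Φ t| ≤ 1 := by
    have hanti : AntitoneOn (fun t => Φ t * Φ t) (Set.Ici 0) := by
      apply antitoneOn_of_deriv_nonpos (convex_Ici 0) (hcont.mul hcont)
      · intro t ht
        rw [interior_Ici] at ht
        exact ((hΦd t ht).mul (hΦd t ht)).differentiableAt.differentiableWithinAt
      · intro t ht
        rw [interior_Ici] at ht
        rw [((hΦd t ht).mul (hΦd t ht)).deriv]
        have hgt : Φ t * f t ≤ 0 := hgle t ht
        nlinarith [hgt]
    intro t ht
    have h2 : Φ t * Φ t ≤ Φ 0 * Φ 0 := hanti Set.self_mem_Ici (Set.mem_Ici.mpr ht) ht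
    rw [h0] at h2
    norm_num at h2
    exact abs_le_one_iff_mul_self_le_one.mpr h2
  -- E = f² is antitone on (0,∞)
  have hEanti : AntitoneOn (fun t => f t * f t) (Set.Ioi 0) := by
    apply antitoneOn_of_deriv_nonpos (convex_Ioi 0) (hfc.mul hfc)
    · intro t ht
      rw [interior_Ioi] at ht
      exact ((hode t ht).mul (hode t ht)).differentiableAt.differentiableWithinAt
    · intro t ht
      rw [interior_Ioi] at ht
      rw [((hode t ht).mul (hode t ht)).deriv]
      have hA := hApos t ht
      have hgt : Φ t * f t ≤ 0 := hgle t ht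
      nlinarith [mul_nonpos_of_nonneg_of_nonpos hA.le hgt]
  -- MVT on [1,2]
  obtain ⟨ξ, hξ, hfξ⟩ := exists_hasDerivAt_eq_slope Φ f (by norm_num : (1:ℝ) < 2)
    (hcont.mono (fun x hx => le_trans zero_le_one hx.1))
    (fun x hx => hΦd x (lt_trans zero_lt_one hx.1))
  have hξ0 : (0:ℝ) < ξ := lt_trans zero_lt_one hξ.1
  have hfξ2 : |f ξ| ≤ 2 := by
    rw [hfξ]
    have h1 := hΦ1 1 zero_le_one
    have h2 := hΦ1 2 (by norm_num)
    rw [abs_div]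
    have := abs_sub (Φ 2) (Φ 1)
    calc |Φ 2 - Φ 1| / |2 - 1| = |Φ 2 - Φ 1| := by norm_num
      _ ≤ |Φ 2| + |Φ 1| := abs_sub _ _
      _ ≤ 2 := by linarith
  -- Main bound on f on (0,∞)
  have hfb : ∀ t > (0:ℝ), |f t| ≤ 2 + I := by
    intro t ht
    rcases le_or_gt ξ t with hcase | hcase
    · -- t ≥ ξ : use antitonicity of f²
      have hE2 : f t * f t ≤ f ξ * f ξ := hEanti (Set.mem_Ioi.mpr hξ0) (Set.mem_Ioi.mpr ht) hcase
      obtain ⟨h1a, h1b⟩ := abs_le.mp hfξ2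
      have h4 : f t * f t ≤ 4 := by nlinarith
      have habs : |f t| ≤ 2 := by
        rw [abs_le]
        constructor <;> nlinarith [sq_nonneg (f t - 2), sq_nonneg (f t + 2)]
      linarith
    · -- 0 < t < ξ : FTC
      have htξ : t ≤ ξ := hcase.le
      have hsub : Set.uIcc t ξ ⊆ Set.Ioi (0:ℝ) := by
        rw [Set.uIcc_of_le htξ]
        exact fun x hx => lt_of_lt_of_le ht hx.1
      have hAΦc : ContinuousOn (fun s => A s * Φ s) (Set.Ioi 0) := hAcont.mul hΦc'
      have hint : IntervalIntegrable (fun s => A s * Φ s) MeasureTheory.volume t ξ :=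
        (hAΦc.mono hsub).intervalIntegrable
      have hftc : ∫ s in t..ξ, A s * Φ s =  f ξ - f t := by
        apply intervalIntegral.integral_eq_sub_of_hasDerivAt
        · intro x hx
          exact hode x (hsub hx)
        · exact hint
      -- |∫ AΦ| ≤ ∫ D over [t,ξ]
      have hDint2 : IntervalIntegrable D MeasureTheory.volume t ξ := by
        apply hDint.mono_set
        rw [Set.uIcc_of_le htξ, Set.uIcc_of_le (by norm_num : (0:ℝ) ≤ 2)]
        exact Set.Icc_subset_Icc ht.le (le_trans hξ.2.le le_rfl)
      have habsint : |∫ s in t..ξ, A s * Φ s| ≤ ∫ s in t..ξ, D s := by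
        calc |∫ s in t..ξ, A s * Φ s| ≤ ∫ s in t..ξ, |A s * Φ s| :=
              intervalIntegral.abs_integral_le_integral_abs htξ
          _ ≤ ∫ s in t..ξ, D s := by
              apply intervalIntegral.integral_mono_on htξ _ hDint2
              · intro x hx
                have hx0 : 0 < x := lt_of_lt_of_le ht hx.1
                have hx2 : x ≤ 2 := le_trans hx.2 hξ.2.le
                have hAx := (hApos x hx0).le
                have hΦx := hΦ1 x hx0.le
                calc |A x * Φ x| = A x * |Φ x| := by
                      rw [abs_mul, abs_of_nonneg hAx]
                  _ ≤ A x * 1 := by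
                      apply mul_le_mul_of_nonneg_left hΦx hAx
                  _ ≤ D x := by rw [mul_one]; exact hAD x ⟨hx0, hx2⟩
              · exact hint.abs
      -- ∫_t^ξ D ≤ I
      have hD1 : IntervalIntegrable D MeasureTheory.volume 0 t := by
        apply hDint.mono_set
        rw [Set.uIcc_of_le ht.le, Set.uIcc_of_le (by norm_num : (0:ℝ) ≤ 2)]
        exact Set.Icc_subset_Icc le_rfl (le_trans htξ hξ.2.le)
      have hD3 : IntervalIntegrable D MeasureTheory.volume ξ 2 := by
        apply hDint.mono_set
        rw [Set.uIcc_of_le hξ.2.le, Set.uIcc_of_le (by norm_num : (0:ℝ) ≤ 2)]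
        exact Set.Icc_subset_Icc hξ0.le le_rfl
      have hsplit1 : (∫ s in (0:ℝ)..t, D s) + ∫ s in t..2, D s = I :=
        intervalIntegral.integral_add_adjacent_intervals hD1 (hDint2.trans hD3)
      have hsplit2 : (∫ s in t..ξ, D s) + ∫ s in ξ..2, D s = ∫ s in t..2, D s :=
        intervalIntegral.integral_add_adjacent_intervals hDint2 hD3
      have hnn1 : 0 ≤ ∫ s in (0:ℝ)..t, D s :=
        intervalIntegral.integral_nonneg ht.le (fun u hu => hD0 u hu.1)
      have hnn3 : 0 ≤ ∫ s in ξ..2, D s :=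
        intervalIntegral.integral_nonneg hξ.2.le (fun u hu => hD0 u (le_trans hξ0.le hu.1))
      have hDle : (∫ s in t..ξ, D s) ≤ I := by linarith
      have : |f t| ≤ |f ξ| + |∫ s in t..ξ, A s * Φ s| := by
        rw [hftc]
        have := abs_sub_abs_le_abs_sub (f t) (f ξ)
        calc |f t| ≤ |f ξ| + |f t - f ξ| := by
              have := abs_sub_abs_le_abs_sub (f t) (f ξ); linarith [abs_nonneg (f t - f ξ)]
          _ = |f ξ| + |f ξ - f t| := by rw [abs_sub_comm]
      linarith
  -- conclude
  intro t ht
  rcases eq_or_lt_of_le ht with heq | hlt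
  · -- t = 0
    rw [← heq]
    by_cases hd : DifferentiableWithinAt ℝ Φ (Set.Ici 0) 0
    · have hDW : HasDerivWithinAt Φ (derivWithin Φ (Set.Ici 0) 0) (Set.Ici 0) 0 :=
        hd.hasDerivWithinAt
      rw [hasDerivWithinAt_iff_tendsto_slope, Set.Ici_sdiff_left] at hDW
      have hbound : ∀ x ∈ Set.Ioi (0:ℝ), |slope Φ 0 x| ≤ 2 + I := by
        intro x hx
        rw [Set.mem_Ioi] at hx
        obtain ⟨ζ, hζ, hfζ⟩ := exists_hasDerivAt_eq_slope Φ f hx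
          (hcont.mono (fun y hy => hy.1)) (fun y hy => hΦd y hy.1)
        have : slope Φ 0 x = f ζ := by
          rw [slope_def_field, hfζ]
        rw [this]
        exact hfb ζ hζ.1
      have hle : |derivWithin Φ (Set.Ici 0) 0| ≤ 2 + I := by
        apply le_of_tendsto hDW.abs
        filter_upwards [self_mem_nhdsWithin] with x hx using hbound x hx
      linarith
    · rw [derivWithin_zero_of_not_differentiableWithinAt hd]
      simp only [abs_zero]
      linarith
  · -- t > 0
    have hmem : Set.Ici (0:ℝ) ∈ nhds t :=
      Filter.mem_of_superset (Ioi_mem_nhds hlt) (Set.Ioi_subset_Ici le_rfl)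
    rw [derivWithin_of_mem_nhds hmem]
    have := hfb t hlt
    linarith

theorem uniform_bound_on_derivative_of_phi_lambda
    (β c C : ℝ) (hβ : -1 < β) (hc : 0 < c) (hC : 0 < C)
    (p : ℝ → ℝ) (hpc : ContinuousOn p (Set.Ioi 0)) (hppos : ∀ u > (0:ℝ), 0 < p u)
    (hplim : Filter.Tendsto p Filter.atTop (nhds c))
    (hpbd₁ : β ≤ 0 → ∀ u > (0:ℝ), p u ≤ C)
    (hpbd₂ : 0 < β → ∀ u > (0:ℝ), p u ≤ C * (1 + u ^ (-β))) :
    ∃ lam₀ > (0:ℝ), ∃ K' > (0:ℝ), ∀ lam : ℝ, 0 < lam → lam ≤ lam₀ →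
      ∀ Φ : ℝ → ℝ, IsSL (fun t => t ^ β * p (t * lam ^ (-(1 / (β + 2))))) Φ →
        ∀ t ≥ (0:ℝ), |derivWithin Φ (Set.Ici 0) t| ≤ K' := by
  have hβ2 : (0:ℝ) < β + 2 := by linarith
  have hβ1 : (0:ℝ) < β + 1 := by linarith
  refine ⟨1, one_pos, 3 + ∫ s in (0:ℝ)..2, (C * s ^ β + C), ?_, ?_⟩
  · have h0 : 0 ≤ ∫ s in (0:ℝ)..2, (C * s ^ β + C) :=
      intervalIntegral.integral_nonneg (by norm_num) (fun u hu =>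
        add_nonneg (mul_nonneg hC.le (Real.rpow_nonneg hu.1 β)) hC.le)
    linarith
  · intro lam hlam hlam1 Φ hΦ
    apply sl_deriv_bound _ Φ (fun s => C * s ^ β + C) _ _ _ _ _ hΦ
    · -- positivity of A
      intro t ht
      exact mul_pos (Real.rpow_pos_of_pos ht β)
        (hppos _ (mul_pos ht (Real.rpow_pos_of_pos hlam _)))
    · -- continuity of A
      apply ContinuousOn.mul
      · exact ContinuousOn.rpow_const continuousOn_id
          (fun t ht => Or.inl (ne_of_gt ht))
      · apply hpc.comp ((continuous_id.mul continuous_const).continuousOn)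
        intro t ht
        exact mul_pos ht (Real.rpow_pos_of_pos hlam _)
    · -- nonnegativity of D
      intro s hs
      exact add_nonneg (mul_nonneg hC.le (Real.rpow_nonneg hs β)) hC.le
    · -- integrability of D
      exact ((intervalIntegral.intervalIntegrable_rpow' hβ).const_mul C).add
        intervalIntegrable_const
    · -- domination A ≤ D on (0,2]
      intro s hs
      obtain ⟨hs0, hs2⟩ := hs
      have hL0 : 0 < lam ^ (-(1 / (β + 2))) := Real.rpow_pos_of_pos hlam _
      have hu : 0 < s * lam ^ (-(1 / (β + 2))) := mul_pos hs0 hL0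
      have hsb : 0 ≤ s ^ β := Real.rpow_nonneg hs0.le β
      rcases le_or_gt β 0 with hb | hb
      · have hp := hpbd₁ hb _ hu
        have h1 : s ^ β * p (s * lam ^ (-(1 / (β + 2)))) ≤ s ^ β * C :=
          mul_le_mul_of_nonneg_left hp hsb
        nlinarith
      · have hp := hpbd₂ hb _ hu
        have key : s ^ β * (s * lam ^ (-(1 / (β + 2)))) ^ (-β)
            = lam ^ (-(1 / (β + 2)) * -β) := by
          rw [Real.mul_rpow hs0.le hL0.le, ← mul_assoc, ← Real.rpow_add hs0,
            add_neg_cancel, Real.rpow_zero, one_mul, ← Real.rpow_mul hlam.le]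
        have hlampow : lam ^ (-(1 / (β + 2)) * -β) ≤ 1 := by
          apply Real.rpow_le_one hlam.le hlam1
          have : -(1 / (β + 2)) * -β = (1 / (β + 2)) * β := by ring
          rw [this]
          exact mul_nonneg (div_nonneg zero_le_one hβ2.le) hb.le
        have h1 : s ^ β * p (s * lam ^ (-(1 / (β + 2))))
            ≤ s ^ β * (C * (1 + (s * lam ^ (-(1 / (β + 2)))) ^ (-β))) :=
          mul_le_mul_of_nonneg_left hp hsb
        have h2 : s ^ β * (C * (1 + (s * lam ^ (-(1 / (β + 2)))) ^ (-β)))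
            = C * s ^ β + C * (s ^ β * (s * lam ^ (-(1 / (β + 2)))) ^ (-β)) := by ring
        rw [h2, key] at h1
        nlinarith
end

section
/- In the setting of the family (A_λ), Φ_{A_λ}(t) converges to 1 as (λ, t) → (0, 0); i.e., for every ε > 0 there exist λ₁ > 0 and t₁ > 0 such that for all λ ∈ (0, λ₁] and t ∈ [0, t₁], one has |Φ_{A_λ}(t) − 1| ≤ ε. -/
open MeasureTheory Filter Set

private lemma ev_gt_of_deriv_pos {f : ℝ → ℝ} {x d : ℝ} (hf : HasDerivAt f d x) (hd : 0 < d) :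
    ∀ᶠ y in nhdsWithin x (Set.Ioi x), f x < f y := by
  have h := hasDerivAt_iff_tendsto_slope.mp hf
  have h2 : ∀ᶠ y in nhdsWithin x {x}ᶜ, 0 < slope f x y := h (Ioi_mem_nhds hd)
  have h3 : nhdsWithin x (Set.Ioi x) ≤ nhdsWithin x {x}ᶜ :=
    nhdsWithin_mono x (fun y hy => ne_of_gt hy)
  filter_upwards [h2.filter_mono h3, self_mem_nhdsWithin] with y hy hy'
  have hyx : x < y := hy'
  rw [slope_def_field] at hy
  have h4 : 0 < y - x := by linarith
  have h5 : 0 < f y - f x := by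
    have := mul_pos hy h4
    rwa [div_mul_cancel₀ _ (ne_of_gt h4)] at this
  linarith

private lemma ev_lt_of_deriv_neg {f : ℝ → ℝ} {x d : ℝ} (hf : HasDerivAt f d x) (hd : d < 0) :
    ∀ᶠ y in nhdsWithin x (Set.Ioi x), f y < f x := by
  have := ev_gt_of_deriv_pos hf.neg (by linarith : 0 < -d)
  filter_upwards [this] with y hy
  have h : -f x < -f y := hy
  linarith

private lemma no_escape {A Φ : ℝ → ℝ} {M : ℝ}
    (hApos : ∀ t > (0:ℝ), 0 < A t)
    (hM : ∀ t ≥ (0:ℝ), |Φ t| ≤ M)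
    (hdiff : ∀ t > (0:ℝ), DifferentiableAt ℝ Φ t)
    (hode : ∀ t > (0:ℝ), HasDerivAt (deriv Φ) (A t * Φ t) t)
    {t₀ : ℝ} (ht₀ : 0 < t₀) (hΦ0 : 0 < Φ t₀) (hd0 : 0 < deriv Φ t₀) : False := by
  have hge : ∀ t ≥ t₀, Φ t₀ ≤ Φ t := by
    by_contra hcon
    push_neg at hcon
    obtain ⟨t₂, ht₂, hΦt₂⟩ := hcon
    set B : Set ℝ := {t | t₀ ≤ t ∧ Φ t < Φ t₀} with hBdef
    have hBne : B.Nonempty := ⟨t₂, ht₂, hΦt₂⟩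
    have hBbd : BddBelow B := ⟨t₀, fun b hb => hb.1⟩
    set T := sInf B with hTdef
    have hTt₀ : t₀ ≤ T := le_csInf hBne fun b hb => hb.1
    have hTpos : 0 < T := lt_of_lt_of_le ht₀ hTt₀
    have hbelow : ∀ s, t₀ ≤ s → s < T → Φ t₀ ≤ Φ s := by
      intro s hs hsT
      by_contra h
      push_neg at h
      exact absurd (csInf_le hBbd ⟨hs, h⟩) (not_le.mpr hsT)
    have hΦT : Φ t₀ ≤ Φ T := by
      rcases eq_or_lt_of_le hTt₀ with h | h
      · rw [← h]
      · have htd : Tendsto Φ (nhdsWithin T (Set.Iio T)) (nhds (Φ T)) :=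
          ((hdiff T hTpos).continuousAt).tendsto.mono_left nhdsWithin_le_nhds
        refine ge_of_tendsto htd ?_
        filter_upwards [Ioo_mem_nhdsLT_of_mem (⟨h, le_rfl⟩ : T ∈ Set.Ioc t₀ T)] with s hs
        exact hbelow s hs.1.le hs.2
    have hmono : MonotoneOn (deriv Φ) (Set.Icc t₀ T) := by
      apply monotoneOn_of_deriv_nonneg (convex_Icc _ _)
      · intro x hx
        exact (hode x (lt_of_lt_of_le ht₀ hx.1)).differentiableAt.continuousAt.continuousWithinAt
      · intro x hx
        rw [interior_Icc] at hx
        exact (hode x (lt_trans ht₀ hx.1)).differentiableAt.differentiableWithinAt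
      · intro x hx
        rw [interior_Icc] at hx
        have hxpos : 0 < x := lt_trans ht₀ hx.1
        rw [(hode x hxpos).deriv]
        exact le_of_lt (mul_pos (hApos x hxpos)
          (lt_of_lt_of_le hΦ0 (hbelow x hx.1.le hx.2)))
    have hdT : deriv Φ t₀ ≤ deriv Φ T :=
      hmono ⟨le_rfl, hTt₀⟩ ⟨hTt₀, le_rfl⟩ hTt₀
    have hev : ∀ᶠ y in nhdsWithin T (Set.Ioi T), Φ T < Φ y :=
      ev_gt_of_deriv_pos (hdiff T hTpos).hasDerivAt (lt_of_lt_of_le hd0 hdT)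
    rw [eventually_nhdsWithin_iff, Metric.eventually_nhds_iff] at hev
    obtain ⟨δ, hδ, hev⟩ := hev
    obtain ⟨b, hbB, hbδ⟩ := exists_lt_of_csInf_lt hBne (lt_add_of_pos_right T hδ)
    have hTb : T ≤ b := csInf_le hBbd hbB
    have hbT : T < b := by
      rcases eq_or_lt_of_le hTb with h | h
      · exfalso; rw [← h] at hbB; exact absurd hΦT (not_le.mpr hbB.2)
      · exact h
    have hdist : dist b T < δ := by
      rw [Real.dist_eq, abs_of_nonneg (by linarith)]
      linarith
    have := hev hdist hbT
    exact absurd (lt_of_lt_of_le hbB.2 hΦT) (not_lt.mpr this.le)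
  have hmono : MonotoneOn (deriv Φ) (Set.Ici t₀) := by
    apply monotoneOn_of_deriv_nonneg (convex_Ici _)
    · intro x hx
      exact (hode x (lt_of_lt_of_le ht₀ hx)).differentiableAt.continuousAt.continuousWithinAt
    · intro x hx
      rw [interior_Ici] at hx
      exact (hode x (lt_trans ht₀ hx)).differentiableAt.differentiableWithinAt
    · intro x hx
      rw [interior_Ici] at hx
      have hxpos : 0 < x := lt_trans ht₀ hx
      rw [(hode x hxpos).deriv]
      exact le_of_lt (mul_pos (hApos x hxpos) (lt_of_lt_of_le hΦ0 (hge x hx.le)))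
  have hMpos : 0 < M := lt_of_lt_of_le hΦ0 (le_trans (le_abs_self _) (hM t₀ ht₀.le))
  set t := t₀ + (M + 1) / deriv Φ t₀ with htdef
  have hfrac : 0 < (M + 1) / deriv Φ t₀ := div_pos (by linarith) hd0
  have htt : t₀ < t := by rw [htdef]; linarith
  obtain ⟨ξ, hξ, hslope⟩ := exists_deriv_eq_slope Φ htt
    (fun s hs => (hdiff s (lt_of_lt_of_le ht₀ hs.1)).continuousAt.continuousWithinAt)
    (fun s hs => (hdiff s (lt_trans ht₀ hs.1)).differentiableWithinAt)
  have hξd : deriv Φ t₀ ≤ deriv Φ ξ := hmono self_mem_Ici hξ.1.le hξ.1.le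
  have htsub : t - t₀ = (M + 1) / deriv Φ t₀ := by rw [htdef]; ring
  have h2 : Φ t - Φ t₀ = deriv Φ ξ * (t - t₀) := by
    rw [hslope, div_mul_cancel₀ _ (ne_of_gt (show (0:ℝ) < t - t₀ by linarith))]
  have h3 : deriv Φ t₀ * (t - t₀) ≤ deriv Φ ξ * (t - t₀) :=
    mul_le_mul_of_nonneg_right hξd (by linarith)
  have h4 : deriv Φ t₀ * (t - t₀) = M + 1 := by
    rw [htsub]
    field_simp
  have h5 : Φ t ≤ M := le_trans (le_abs_self _) (hM t (by linarith))
  linarith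

private lemma deriv_neg_of_pos {A Φ : ℝ → ℝ} {M : ℝ}
    (hApos : ∀ t > (0:ℝ), 0 < A t)
    (hM : ∀ t ≥ (0:ℝ), |Φ t| ≤ M)
    (hdiff : ∀ t > (0:ℝ), DifferentiableAt ℝ Φ t)
    (hode : ∀ t > (0:ℝ), HasDerivAt (deriv Φ) (A t * Φ t) t) :
    ∀ t > (0:ℝ), 0 < Φ t → deriv Φ t < 0 := by
  intro t ht hΦ
  rcases lt_or_ge (deriv Φ t) 0 with h | h
  · exact h
  exfalso
  rcases eq_or_lt_of_le h with h' | h'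
  · have hAt : 0 < A t * Φ t := mul_pos (hApos t ht) hΦ
    have hev1 : ∀ᶠ y in nhdsWithin t (Set.Ioi t), deriv Φ t < deriv Φ y :=
      ev_gt_of_deriv_pos (hode t ht) hAt
    have hev2 : ∀ᶠ y in nhds t, 0 < Φ y :=
      (hdiff t ht).continuousAt (Ioi_mem_nhds hΦ)
    obtain ⟨y, h1, h2, h3⟩ :=
      (hev1.and ((hev2.filter_mono nhdsWithin_le_nhds).and eventually_mem_nhdsWithin)).exists
    exact no_escape hApos hM hdiff hode (lt_trans ht h3) h2 (by rw [← h'] at h1; exact h1)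
  · exact no_escape hApos hM hdiff hode ht hΦ h'

private lemma sol_pos {A Φ : ℝ → ℝ} {M : ℝ}
    (hApos : ∀ t > (0:ℝ), 0 < A t)
    (hAcont : ContinuousOn A (Set.Ioi 0))
    (hcont : ContinuousOn Φ (Set.Ici 0))
    (hM : ∀ t ≥ (0:ℝ), |Φ t| ≤ M)
    (h0 : Φ 0 = 1)
    (hdiff : ∀ t > (0:ℝ), DifferentiableAt ℝ Φ t)
    (hode : ∀ t > (0:ℝ), HasDerivAt (deriv Φ) (A t * Φ t) t) :
    ∀ t ≥ (0:ℝ), 0 < Φ t := by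
  by_contra hcon
  push_neg at hcon
  obtain ⟨t₂, ht₂, hΦ₂⟩ := hcon
  set Z : Set ℝ := {t | 0 ≤ t ∧ Φ t ≤ 0} with hZdef
  have hZne : Z.Nonempty := ⟨t₂, ht₂, hΦ₂⟩
  have hZbd : BddBelow Z := ⟨0, fun z hz => hz.1⟩
  have hZclosed : IsClosed Z := by
    have hZeq : Z = Set.Ici 0 ∩ Φ ⁻¹' Set.Iic 0 := rfl
    rw [hZeq]
    exact hcont.preimage_isClosed_of_isClosed isClosed_Ici isClosed_Iic
  have hTZ : sInf Z ∈ Z := hZclosed.csInf_mem hZne hZbd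
  set T := sInf Z with hTdef
  have hT0 : 0 ≤ T := hTZ.1
  have hTpos : 0 < T := by
    rcases eq_or_lt_of_le hT0 with h | h
    · exfalso
      have := hTZ.2
      rw [← h, h0] at this
      linarith
    · exact h
  have hbefore : ∀ s, 0 ≤ s → s < T → 0 < Φ s := by
    intro s hs hsT
    by_contra h
    push_neg at h
    exact absurd (csInf_le hZbd ⟨hs, h⟩) (not_le.mpr hsT)
  have hΦT : Φ T = 0 := by
    refine le_antisymm hTZ.2 ?_
    have htd : Tendsto Φ (nhdsWithin T (Set.Iio T)) (nhds (Φ T)) :=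
      ((hdiff T hTpos).continuousAt).tendsto.mono_left nhdsWithin_le_nhds
    refine ge_of_tendsto htd ?_
    filter_upwards [Ioo_mem_nhdsLT_of_mem (⟨hTpos, le_rfl⟩ : T ∈ Set.Ioc 0 T)] with s hs
    exact (hbefore s hs.1.le hs.2).le
  have hdT : deriv Φ T ≤ 0 := by
    have htd : Tendsto (deriv Φ) (nhdsWithin T (Set.Iio T)) (nhds (deriv Φ T)) :=
      ((hode T hTpos).differentiableAt.continuousAt).tendsto.mono_left nhdsWithin_le_nhds
    refine le_of_tendsto htd ?_
    filter_upwards [Ioo_mem_nhdsLT_of_mem (⟨hTpos, le_rfl⟩ : T ∈ Set.Ioc 0 T)] with s hs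
    exact (deriv_neg_of_pos hApos hM hdiff hode s hs.1 (hbefore s hs.1.le hs.2)).le
  rcases eq_or_lt_of_le hdT with hdT0 | hdTneg
  · -- deriv Φ T = 0 : energy argument
    set t₀ := T / 2 with ht₀def
    have ht₀pos : 0 < t₀ := by positivity
    have ht₀T : t₀ < T := by rw [ht₀def]; linarith
    obtain ⟨K, hK⟩ := (isCompact_Icc : IsCompact (Set.Icc t₀ T)).exists_bound_of_continuousOn
      (hAcont.mono (fun x hx => lt_of_lt_of_le ht₀pos hx.1))
    have hKA : ∀ x ∈ Set.Icc t₀ T, A x ≤ K := fun x hx => le_trans (le_abs_self _) (hK x hx)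
    set G : ℝ → ℝ := fun s => (Φ s ^ 2 + deriv Φ s ^ 2) * Real.exp ((1 + K) * s) with hGdef
    have hGd : ∀ s, 0 < s → HasDerivAt G
        ((2 * Φ s * deriv Φ s + 2 * deriv Φ s * (A s * Φ s)) * Real.exp ((1 + K) * s)
          + (Φ s ^ 2 + deriv Φ s ^ 2) * (Real.exp ((1 + K) * s) * (1 + K))) s := by
      intro s hs
      have h1 : HasDerivAt (fun y => Φ y ^ 2) (2 * Φ s * deriv Φ s) s := by
        have h := ((hdiff s hs).hasDerivAt).pow 2
        norm_num at h
        exact h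
      have h2 : HasDerivAt (fun y => deriv Φ y ^ 2) (2 * deriv Φ s * (A s * Φ s)) s := by
        have h := (hode s hs).pow 2
        norm_num at h
        exact h
      have h3 : HasDerivAt (fun u => Real.exp ((1 + K) * u))
          (Real.exp ((1 + K) * s) * (1 + K)) s := by
        have h4 : HasDerivAt (fun u : ℝ => (1 + K) * u) (1 + K) s := by
          simpa using (hasDerivAt_id s).const_mul (1 + K)
        exact h4.exp
      exact (h1.add h2).mul h3
    have hGmono : MonotoneOn G (Set.Icc t₀ T) := by
      apply monotoneOn_of_deriv_nonneg (convex_Icc _ _)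
      · intro x hx
        exact (hGd x (lt_of_lt_of_le ht₀pos hx.1)).differentiableAt.continuousAt.continuousWithinAt
      · intro x hx
        rw [interior_Icc] at hx
        exact (hGd x (lt_trans ht₀pos hx.1)).differentiableAt.differentiableWithinAt
      · intro x hx
        rw [interior_Icc] at hx
        have hx0 : 0 < x := lt_trans ht₀pos hx.1
        rw [(hGd x hx0).deriv]
        have hAx : 0 < A x := hApos x hx0
        have hAK : A x ≤ K := hKA x (Ioo_subset_Icc_self hx)
        have hex : 0 < Real.exp ((1 + K) * x) := Real.exp_pos _
        set a := Φ x
        set b := deriv Φ x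
        nlinarith [mul_nonneg (mul_nonneg hex.le (by linarith : (0:ℝ) ≤ K - A x))
            (by positivity : (0:ℝ) ≤ a ^ 2 + b ^ 2),
          mul_nonneg (mul_nonneg hex.le (by linarith : (0:ℝ) ≤ 1 + A x)) (sq_nonneg (a + b))]
    have h1 : G t₀ ≤ G T := hGmono ⟨le_rfl, ht₀T.le⟩ ⟨ht₀T.le, le_rfl⟩ ht₀T.le
    have hGT : G T = 0 := by
      rw [hGdef]
      simp only [hΦT, hdT0]
      ring
    have hΦt₀ : 0 < Φ t₀ := hbefore t₀ ht₀pos.le ht₀T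
    have hGpos : 0 < G t₀ := by
      have hexp := Real.exp_pos ((1 + K) * t₀)
      have hh : 0 < (Φ t₀ ^ 2 + deriv Φ t₀ ^ 2) * Real.exp ((1 + K) * t₀) := by
        nlinarith [mul_pos (pow_pos hΦt₀ 2) hexp, mul_nonneg (sq_nonneg (deriv Φ t₀)) hexp.le]
      exact hh
    linarith
  · -- deriv Φ T < 0
    have hev1 : ∀ᶠ y in nhdsWithin T (Set.Ioi T), Φ y < Φ T :=
      ev_lt_of_deriv_neg (hdiff T hTpos).hasDerivAt hdTneg
    have hev2 : ∀ᶠ y in nhds T, deriv Φ y < 0 :=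
      ((hode T hTpos).differentiableAt.continuousAt) (Iio_mem_nhds hdTneg)
    obtain ⟨y, h1, h2, h3⟩ :=
      (hev1.and ((hev2.filter_mono nhdsWithin_le_nhds).and eventually_mem_nhdsWithin)).exists
    have hy0 : 0 < y := lt_trans hTpos h3
    have hdnegeq : deriv (fun s => -Φ s) = fun s => -(deriv Φ s) := by
      funext s
      exact deriv.neg
    refine no_escape (A := A) (Φ := fun s => -Φ s) (M := M) hApos ?_ ?_ ?_ hy0 ?_ ?_
    · intro s hs
      rw [abs_neg]
      exact hM s hs
    · intro s hs
      exact (hdiff s hs).neg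
    · intro s hs
      rw [hdnegeq]
      have : HasDerivAt (fun s => -deriv Φ s) (-(A s * Φ s)) s := (hode s hs).neg
      convert this using 1
      ring
    · show 0 < -Φ y
      rw [hΦT] at h1
      linarith
    · rw [hdnegeq]
      simp only
      linarith


theorem phi_lambda_tendsto_one_at_origin
    (β c C : ℝ) (hβ : -1 < β) (hc : 0 < c) (hC : 0 < C)
    (p : ℝ → ℝ) (hpc : ContinuousOn p (Set.Ioi 0)) (hppos : ∀ u > (0:ℝ), 0 < p u)
    (hplim : Filter.Tendsto p Filter.atTop (nhds c))
    (hpbd₁ : β ≤ 0 → ∀ u > (0:ℝ), p u ≤ C)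
    (hpbd₂ : 0 < β → ∀ u > (0:ℝ), p u ≤ C * (1 + u ^ (-β))) :
    ∀ ε > (0:ℝ), ∃ lam₁ > (0:ℝ), ∃ t₁ > (0:ℝ),
      ∀ lam : ℝ, 0 < lam → lam ≤ lam₁ → ∀ t : ℝ, 0 ≤ t → t ≤ t₁ →
        ∀ Φ : ℝ → ℝ, IsSL (fun u => u ^ β * p (u * lam ^ (-(1 / (β + 2))))) Φ →
          |Φ t - 1| ≤ ε := by
  intro ε hε
  have hβ2 : 0 < β + 2 := by linarith
  have hβ1 : 0 < β + 1 := by linarith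
  set K₀ : ℝ := C * ((2:ℝ) ^ (β + 1) / (β + 1)) + 2 * C with hK₀def
  have h2p : 0 < (2:ℝ) ^ (β + 1) := Real.rpow_pos_of_pos (by norm_num) _
  have hK₀pos : 0 < K₀ := by rw [hK₀def]; positivity
  set Kc : ℝ := K₀ + 1 with hKcdef
  have hKc : 0 < Kc := by rw [hKcdef]; positivity
  refine ⟨1, one_pos, min 1 (ε / Kc), lt_min one_pos (by positivity), ?_⟩
  intro lam hlam hlam1 t ht ht1 Φ hSL
  set μ : ℝ := lam ^ (-(1 / (β + 2))) with hμdef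
  have hμpos : 0 < μ := Real.rpow_pos_of_pos hlam _
  set A : ℝ → ℝ := fun u => u ^ β * p (u * μ) with hAdef
  rcases eq_or_lt_of_le ht with h | htpos
  · rw [← h, hSL.2.2.1]
    simpa using hε.le
  obtain ⟨hcont, ⟨M, hM⟩, h0, hdiff, hode⟩ := hSL
  have hApos : ∀ u > (0:ℝ), 0 < A u := fun u hu =>
    mul_pos (Real.rpow_pos_of_pos hu β) (hppos _ (mul_pos hu hμpos))
  have hAcont : ContinuousOn A (Set.Ioi 0) := by
    apply ContinuousOn.mul
    · intro x hx
      exact (Real.continuousAt_rpow_const x β (Or.inl (ne_of_gt hx))).continuousWithinAt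
    · have hmaps : Set.MapsTo (fun u : ℝ => u * μ) (Set.Ioi 0) (Set.Ioi 0) :=
        fun x hx => mul_pos hx hμpos
      exact hpc.comp ((continuous_id.mul continuous_const).continuousOn) hmaps
  have hAbd : ∀ u > (0:ℝ), A u ≤ C * u ^ β + C := by
    intro u hu
    have hub : 0 < u ^ β := Real.rpow_pos_of_pos hu β
    rcases le_or_gt β 0 with hb | hb
    · have hp := hpbd₁ hb (u * μ) (mul_pos hu hμpos)
      have : A u = u ^ β * p (u * μ) := rfl
      nlinarith
    · have hp := hpbd₂ hb (u * μ) (mul_pos hu hμpos)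
      have key : u ^ β * (u * μ) ^ (-β) = μ ^ (-β) := by
        rw [Real.mul_rpow hu.le hμpos.le, ← mul_assoc, ← Real.rpow_add hu]
        simp
      have hμβ : μ ^ (-β) ≤ 1 := by
        rw [hμdef, ← Real.rpow_mul hlam.le]
        apply Real.rpow_le_one hlam.le hlam1
        have heq : -(1 / (β + 2)) * -β = 1 / (β + 2) * β := by ring
        rw [heq]
        positivity
      calc A u = u ^ β * p (u * μ) := rfl
        _ ≤ u ^ β * (C * (1 + (u * μ) ^ (-β))) := mul_le_mul_of_nonneg_left hp hub.le
        _ = C * u ^ β + C * (u ^ β * (u * μ) ^ (-β)) := by ring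
        _ = C * u ^ β + C * μ ^ (-β) := by rw [key]
        _ ≤ C * u ^ β + C := by nlinarith
  have hpos : ∀ s ≥ (0:ℝ), 0 < Φ s :=
    sol_pos (A := A) hApos hAcont hcont hM h0 hdiff hode
  have hdneg : ∀ s, 0 < s → deriv Φ s < 0 := fun s hs =>
    deriv_neg_of_pos (A := A) hApos hM hdiff hode s hs (hpos s hs.le)
  have hanti : StrictAntiOn Φ (Set.Ici 0) :=
    strictAntiOn_of_deriv_neg (convex_Ici 0) hcont
      (fun x hx => by rw [interior_Ici] at hx; exact hdneg x hx)
  have hle1 : ∀ s ≥ (0:ℝ), Φ s ≤ 1 := by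
    intro s hs
    rcases eq_or_lt_of_le hs with h | h
    · rw [← h, h0]
    · have h2 := hanti self_mem_Ici hs h
      rw [h0] at h2
      exact h2.le
  have hΦcont : ∀ a b : ℝ, 0 < a → ContinuousOn Φ (Set.Icc a b) := fun a b ha s hs =>
    (hdiff s (lt_of_lt_of_le ha hs.1)).continuousAt.continuousWithinAt
  have hIntAΦ : ∀ a b : ℝ, 0 < a → a ≤ b →
      IntervalIntegrable (fun u => A u * Φ u) volume a b := by
    intro a b ha hab
    apply ContinuousOn.intervalIntegrable
    rw [uIcc_of_le hab]
    exact (hAcont.mono (fun x hx => lt_of_lt_of_le ha hx.1)).mul (hΦcont a b ha)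
  have hFTC : ∀ a b : ℝ, 0 < a → a ≤ b →
      (∫ u in a..b, A u * Φ u) = deriv Φ b - deriv Φ a := by
    intro a b ha hab
    apply intervalIntegral.integral_eq_sub_of_hasDerivAt
    · intro x hx
      rw [uIcc_of_le hab] at hx
      exact hode x (lt_of_lt_of_le ha hx.1)
    · exact hIntAΦ a b ha hab
  obtain ⟨η, hη, hηs⟩ := exists_deriv_eq_slope Φ (by norm_num : (1:ℝ) < 2)
    (hΦcont 1 2 one_pos) (fun s hs => (hdiff s (lt_trans one_pos hs.1)).differentiableWithinAt)
  have hη1 : 0 < η := lt_trans one_pos hη.1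
  have hd2 : -1 ≤ deriv Φ 2 := by
    have h1 : (∫ u in η..2, A u * Φ u) = deriv Φ 2 - deriv Φ η := hFTC η 2 hη1 hη.2.le
    have h2 : 0 ≤ ∫ u in η..2, A u * Φ u := by
      apply intervalIntegral.integral_nonneg hη.2.le
      intro u hu
      have hu0 : 0 < u := lt_of_lt_of_le hη1 hu.1
      exact (mul_pos (hApos u hu0) (hpos u hu0.le)).le
    have h3 : deriv Φ η = Φ 2 - Φ 1 := by rw [hηs]; norm_num
    have h4 : 0 < Φ 2 := hpos 2 (by norm_num)
    have h5 : Φ 1 ≤ 1 := hle1 1 (by norm_num)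
    linarith
  obtain ⟨ξ, hξ, hξs⟩ := exists_deriv_eq_slope Φ htpos
    (hcont.mono (fun s hs => hs.1)) (fun s hs => (hdiff s hs.1).differentiableWithinAt)
  have hξ0 : 0 < ξ := hξ.1
  have ht1' : t ≤ 1 := le_trans ht1 (min_le_left _ _)
  have hξ2 : ξ ≤ 2 := by
    have := hξ.2
    linarith
  have hIntA : IntervalIntegrable A volume ξ 2 := by
    apply ContinuousOn.intervalIntegrable
    rw [uIcc_of_le hξ2]
    exact hAcont.mono (fun x hx => lt_of_lt_of_le hξ0 hx.1)
  have hrpowcont : ContinuousOn (fun u : ℝ => u ^ β) (Set.Icc ξ 2) := fun x hx =>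
    (Real.continuousAt_rpow_const x β
      (Or.inl (ne_of_gt (lt_of_lt_of_le hξ0 hx.1)))).continuousWithinAt
  have hIntr : IntervalIntegrable (fun u : ℝ => u ^ β) volume ξ 2 := by
    apply ContinuousOn.intervalIntegrable
    rw [uIcc_of_le hξ2]
    exact hrpowcont
  have hIntB : IntervalIntegrable (fun u => C * u ^ β + C) volume ξ 2 := by
    apply ContinuousOn.intervalIntegrable
    rw [uIcc_of_le hξ2]
    exact (continuousOn_const.mul hrpowcont).add continuousOn_const
  have hc1 : (∫ u in ξ..2, A u * Φ u) ≤ ∫ u in ξ..2, A u := by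
    apply intervalIntegral.integral_mono_on hξ2 (hIntAΦ ξ 2 hξ0 hξ2) hIntA
    intro u hu
    have hu0 : 0 < u := lt_of_lt_of_le hξ0 hu.1
    have h2 := hle1 u hu0.le
    nlinarith [hApos u hu0]
  have hc2 : (∫ u in ξ..2, A u) ≤ ∫ u in ξ..2, (C * u ^ β + C) :=
    intervalIntegral.integral_mono_on hξ2 hIntA hIntB
      (fun u hu => hAbd u (lt_of_lt_of_le hξ0 hu.1))
  have hc3 : (∫ u in ξ..2, (C * u ^ β + C)) ≤ K₀ := by
    rw [intervalIntegral.integral_add (hIntr.const_mul C) intervalIntegrable_const,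
      intervalIntegral.integral_const_mul, integral_rpow (Or.inl hβ),
      intervalIntegral.integral_const, smul_eq_mul]
    have h1 : 0 ≤ ξ ^ (β + 1) := Real.rpow_nonneg hξ0.le _
    have h3 : ((2:ℝ) ^ (β + 1) - ξ ^ (β + 1)) ≤ (2:ℝ) ^ (β + 1) := by linarith
    have h4 : ((2:ℝ) ^ (β + 1) - ξ ^ (β + 1)) / (β + 1) ≤ (2:ℝ) ^ (β + 1) / (β + 1) := by
      gcongr
    have h5 : C * (((2:ℝ) ^ (β + 1) - ξ ^ (β + 1)) / (β + 1)) ≤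
        C * ((2:ℝ) ^ (β + 1) / (β + 1)) := mul_le_mul_of_nonneg_left h4 hC.le
    rw [hK₀def]
    nlinarith
  have hftc2 : (∫ u in ξ..2, A u * Φ u) = deriv Φ 2 - deriv Φ ξ := hFTC ξ 2 hξ0 hξ2
  have hDξ : -deriv Φ ξ ≤ Kc := by
    have h6 : deriv Φ 2 - deriv Φ ξ ≤ K₀ := by
      rw [← hftc2]
      linarith
    rw [hKcdef]
    linarith
  have hslope2 : Φ t - 1 = deriv Φ ξ * t := by
    rw [hξs, h0, sub_zero, div_mul_cancel₀ _ (ne_of_gt htpos)]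
  have hfin : 1 - Φ t ≤ ε := by
    have h6 : 1 - Φ t = -deriv Φ ξ * t := by rw [neg_mul]; linarith
    have h7 : -deriv Φ ξ * t ≤ Kc * t := mul_le_mul_of_nonneg_right hDξ ht
    have h8 : t ≤ ε / Kc := le_trans ht1 (min_le_right _ _)
    have h9 : Kc * t ≤ ε := (le_div_iff₀' hKc).mp h8
    linarith
  have habs : |Φ t - 1| = 1 - Φ t := by
    rw [abs_of_nonpos (by linarith [hle1 t ht] : Φ t - 1 ≤ 0)]
    ring
  rw [habs]
  exact hfin
end

section
/- In the setting of the family (A_λ), set δ := (1/c) · inf_{v ≥ 1} p(v), which is strictly positive. Then for all λ ∈ (0, 1] and all t ≥ 1 one has Φ_{A_λ}(t) ≤ Φ_{A₀}(δ^α t) / Φ_{A₀}(δ^α). Consequently, Φ_{A_λ}(t) converges to 0 as t → ∞, uniformly in λ ∈ (0, 1]. -/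
open MeasureTheory Filter Set

/-- monotone deriv from nonneg second derivative -/
lemma SL.monoDeriv {f h : ℝ → ℝ}
    (hd : ∀ t > (0:ℝ), HasDerivAt f (h t) t) (hh : ∀ t > (0:ℝ), 0 ≤ h t) :
    MonotoneOn f (Set.Ioi 0) := by
  have hdiff : DifferentiableOn ℝ f (Set.Ioi 0) :=
    fun t ht => ((hd t ht).differentiableAt).differentiableWithinAt
  have := monotoneOn_of_deriv_nonneg (convex_Ioi (0:ℝ)) hdiff.continuousOn
    (by rwa [interior_Ioi])
    (fun t ht => by
      rw [interior_Ioi] at ht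
      rw [(hd t ht).deriv]; exact hh t ht)
  exact this

/-- If deriv f is monotone on (0,∞) and f is bounded above on [0,∞), then deriv f ≤ 0. -/
lemma SL.derivNonpos {f : ℝ → ℝ} {M : ℝ}
    (hdiff : ∀ t > (0:ℝ), DifferentiableAt ℝ f t)
    (hmono : MonotoneOn (deriv f) (Set.Ioi 0))
    (hbdd : ∀ t ≥ (0:ℝ), f t ≤ M) :
    ∀ t > (0:ℝ), deriv f t ≤ 0 := by
  intro s hs
  by_contra hpos
  push_neg at hpos
  set d := deriv f s with hd
  set t := s + (M - f s) / d + 1 with ht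
  have hfsM : f s ≤ M := hbdd s hs.le
  have hst : s < t := by
    have : 0 ≤ (M - f s) / d := div_nonneg (by linarith) hpos.le
    simp only [ht]; linarith
  have hcont : ContinuousOn f (Set.Icc s t) := fun x hx =>
    ((hdiff x (lt_of_lt_of_le hs hx.1)).continuousAt).continuousWithinAt
  have hdiff' : DifferentiableOn ℝ f (Set.Ioo s t) := fun x hx =>
    (hdiff x (hs.trans hx.1)).differentiableWithinAt
  obtain ⟨ξ, hξ, hslope⟩ := exists_deriv_eq_slope f hst hcont hdiff'
  have hξpos : (0:ℝ) < ξ := hs.trans hξ.1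
  have hge : d ≤ deriv f ξ := hmono hs hξpos hξ.1.le
  have : (f t - f s) / (t - s) ≥ d := hslope ▸ hge
  have htpos : 0 < t - s := by linarith
  have h1 : f t - f s ≥ d * (t - s) := by
    have h := (le_div_iff₀ htpos).mp this
    linarith
  have h2 : d * (t - s) = M - f s + d := by
    have : t - s = (M - f s)/d + 1 := by simp [ht]; ring
    rw [this]; field_simp
  have : f t ≤ M := hbdd t (by linarith)
  nlinarith

/-- Convexity-type slope bound: for 0 < s < t, -(deriv f t) * (t - s) ≤ f s - f t. -/
lemma SL.slopeBound {f : ℝ → ℝ} {s t : ℝ}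
    (hdiff : ∀ x > (0:ℝ), DifferentiableAt ℝ f x)
    (hmono : MonotoneOn (deriv f) (Set.Ioi 0))
    (hs : 0 < s) (hst : s < t) :
    f t - f s ≤ deriv f t * (t - s) := by
  have hcont : ContinuousOn f (Set.Icc s t) := fun x hx =>
    ((hdiff x (lt_of_lt_of_le hs hx.1)).continuousAt).continuousWithinAt
  have hdiff' : DifferentiableOn ℝ f (Set.Ioo s t) := fun x hx =>
    (hdiff x (hs.trans hx.1)).differentiableWithinAt
  obtain ⟨ξ, hξ, hslope⟩ := exists_deriv_eq_slope f hst hcont hdiff'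
  have hle : deriv f ξ ≤ deriv f t := hmono (hs.trans hξ.1) (hs.trans (hξ.1.trans hξ.2)) hξ.2.le
  have htpos : 0 < t - s := by linarith
  have : (f t - f s) / (t - s) ≤ deriv f t := hslope ▸ hle
  calc f t - f s = (f t - f s)/(t-s) * (t-s) := by field_simp
    _ ≤ deriv f t * (t - s) := by nlinarith

set_option maxHeartbeats 1000000 in
lemma SL.pos {A Φ : ℝ → ℝ} (hA : ContinuousOn A (Set.Ioi 0))
    (hApos : ∀ t > (0:ℝ), 0 < A t) (h : IsSL A Φ) :
    ∀ t ≥ (0:ℝ), 0 < Φ t := by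
  obtain ⟨hcont, ⟨M, hM⟩, h0, hdiff, hode⟩ := h
  have hΦ' : ∀ t > (0:ℝ), HasDerivAt Φ (deriv Φ t) t := fun t ht => (hdiff t ht).hasDerivAt
  set g : ℝ → ℝ := fun t => Φ t * Φ t with hgdef
  set gd : ℝ → ℝ := fun t => deriv Φ t * Φ t + Φ t * deriv Φ t with hgddef
  have hg : ∀ t > (0:ℝ), HasDerivAt g (gd t) t := fun t ht => (hΦ' t ht).mul (hΦ' t ht)
  have hgd : ∀ t > (0:ℝ), HasDerivAt gd
      ((A t * Φ t) * Φ t + deriv Φ t * deriv Φ t +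
        (deriv Φ t * deriv Φ t + Φ t * (A t * Φ t))) t :=
    fun t ht => ((hode t ht).mul (hΦ' t ht)).add ((hΦ' t ht).mul (hode t ht))
  have hgdmono : MonotoneOn gd (Set.Ioi 0) := by
    apply SL.monoDeriv hgd
    intro t ht
    have := (hApos t ht).le
    nlinarith [sq_nonneg (deriv Φ t), sq_nonneg (Φ t)]
  have hderivg : ∀ t > (0:ℝ), deriv g t = gd t := fun t ht => (hg t ht).deriv
  have hgmono : MonotoneOn (deriv g) (Set.Ioi 0) := by
    intro a ha b hb hab
    rw [hderivg a ha, hderivg b hb]; exact hgdmono ha hb hab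
  have hgbdd : ∀ t ≥ (0:ℝ), g t ≤ M * M := by
    intro t ht
    have := hM t ht
    have h1 := abs_le.mp this
    have : g t = Φ t * Φ t := rfl
    nlinarith [h1.1, h1.2]
  have hgd0 : ∀ t > (0:ℝ), deriv g t ≤ 0 :=
    SL.derivNonpos (fun t ht => (hg t ht).differentiableAt) hgmono hgbdd
  have hganti : AntitoneOn g (Set.Ici 0) := by
    apply antitoneOn_of_deriv_nonpos (convex_Ici 0) (hcont.mul hcont)
    · rw [interior_Ici]
      exact fun t ht => (hg t ht).differentiableAt.differentiableWithinAt
    · rw [interior_Ici]; exact hgd0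
  -- positivity
  by_contra hnot
  push_neg at hnot
  obtain ⟨t₀, ht₀, hΦt₀⟩ := hnot
  set Z : Set ℝ := {t | 0 ≤ t ∧ Φ t ≤ 0} with hZdef
  have hZne : Z.Nonempty := ⟨t₀, ht₀, hΦt₀⟩
  have hZbdd : BddBelow Z := ⟨0, fun x hx => hx.1⟩
  set z := sInf Z with hzdef
  have hz0 : 0 ≤ z := le_csInf hZne fun x hx => hx.1
  have hposlt : ∀ t, 0 ≤ t → t < z → 0 < Φ t := by
    intro t ht htz
    by_contra hc
    push_neg at hc
    exact absurd (csInf_le hZbdd ⟨ht, hc⟩) (not_le.mpr htz)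
  have hΦz_le : Φ z ≤ 0 := by
    by_contra hc
    push_neg at hc
    have hev : ∀ᶠ x in nhdsWithin z (Set.Ici 0), 0 < Φ x :=
      (hcont z hz0).eventually (eventually_gt_nhds hc)
    rw [Filter.Eventually, Metric.mem_nhdsWithin_iff] at hev
    obtain ⟨ε, hε, hball⟩ := hev
    obtain ⟨w, hwZ, hwlt⟩ : ∃ w ∈ Z, w < z + ε := by
      by_contra hcc
      push_neg at hcc
      have : z + ε ≤ z := le_csInf hZne hcc
      linarith
    have hwz : z ≤ w := csInf_le hZbdd hwZ
    have hwball : w ∈ Metric.ball z ε := by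
      rw [Metric.mem_ball, Real.dist_eq, abs_of_nonneg (by linarith)]; linarith
    have : 0 < Φ w := hball ⟨hwball, hwZ.1⟩
    linarith [hwZ.2]
  have hzpos : 0 < z := by
    rcases lt_or_eq_of_le hz0 with h' | h'
    · exact h'
    · exfalso
      rw [← h', h0] at hΦz_le
      linarith
  have hΦz_ge : 0 ≤ Φ z := by
    have hcw : ContinuousWithinAt Φ (Set.Ioo 0 z) z :=
      (hcont z hz0).mono (fun x hx => le_of_lt hx.1)
    have : Filter.Tendsto Φ (nhdsWithin z (Set.Iio z)) (nhds (Φ z)) := by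
      rwa [ContinuousWithinAt, nhdsWithin_Ioo_eq_nhdsLT hzpos] at hcw
    refine ge_of_tendsto this ?_
    filter_upwards [Ioo_mem_nhdsLT_of_mem (show z ∈ Set.Ioc (z/2) z from ⟨by linarith, le_refl z⟩)]
      with x hx
    exact (hposlt x (by linarith [hx.1]) hx.2).le
  have hΦz : Φ z = 0 := le_antisymm hΦz_le hΦz_ge
  have hgz : g z = 0 := by simp [hgdef, hΦz]
  have hΦzero : ∀ t ≥ z, Φ t = 0 := by
    intro t ht
    have h1 : g t ≤ g z := hganti (by exact hz0) (by linarith : (0:ℝ) ≤ t) ht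
    have h2 : 0 ≤ g t := mul_self_nonneg _
    have : g t = 0 := le_antisymm (hgz ▸ h1) h2
    exact mul_self_eq_zero.mp this
  have hder_z : deriv Φ z = 0 := by
    have h1 : HasDerivWithinAt Φ (deriv Φ z) (Set.Ici z) z :=
      (hΦ' z hzpos).hasDerivWithinAt
    have h2 : HasDerivWithinAt Φ 0 (Set.Ici z) z := by
      have hc : HasDerivWithinAt (fun _ : ℝ => (0:ℝ)) 0 (Set.Ici z) z :=
        (hasDerivAt_const z (0:ℝ)).hasDerivWithinAt
      exact hc.congr (fun x hx => hΦzero x hx) hΦz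
    have hu : UniqueDiffWithinAt ℝ (Set.Ici z) z := uniqueDiffOn_Ici z z (Set.self_mem_Ici)
    rw [← h1.derivWithin hu, ← h2.derivWithin hu]
  -- Gronwall on [z/2, z]
  set z₀ := z / 2 with hz₀def
  have hz₀pos : 0 < z₀ := by positivity
  have hz₀lt : z₀ < z := by simp only [hz₀def]; linarith
  obtain ⟨K, hK⟩ := (isCompact_Icc (a := z₀) (b := z)).exists_bound_of_continuousOn
    (hA.mono (fun x hx => lt_of_lt_of_le hz₀pos hx.1))
  have hKpos : 0 ≤ K := le_trans (abs_nonneg _) (by simpa using hK z₀ ⟨le_refl _, hz₀lt.le⟩)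
  set E : ℝ → ℝ := fun t => Φ t * Φ t + deriv Φ t * deriv Φ t with hEdef
  set Ed : ℝ → ℝ := fun t => (deriv Φ t * Φ t + Φ t * deriv Φ t) +
      ((A t * Φ t) * deriv Φ t + deriv Φ t * (A t * Φ t)) with hEddef
  have hE : ∀ t > (0:ℝ), HasDerivAt E (Ed t) t := fun t ht =>
    ((hΦ' t ht).mul (hΦ' t ht)).add ((hode t ht).mul (hode t ht))
  have hEz : E z = 0 := by simp [hEdef, hΦz, hder_z]
  have hEnonneg : ∀ t, 0 ≤ E t := fun t => by
    have := mul_self_nonneg (Φ t); have := mul_self_nonneg (deriv Φ t); simp only [hEdef]; linarith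
  set F : ℝ → ℝ := fun t => E (z - t) with hFdef
  have hgron := norm_le_gronwallBound_of_norm_deriv_right_le (f := F)
    (f' := fun t => -Ed (z - t)) (δ := 0) (K := 2 * (1 + K)) (ε := 0) (a := 0) (b := z - z₀)
    ?_ ?_ ?_ ?_
  · have hend := hgron (z - z₀) ⟨by linarith, le_refl _⟩
    rw [gronwallBound_ε0_δ0] at hend
    have hFz : F (z - z₀) = E z₀ := by simp [hFdef]
    have hE0 : E z₀ = 0 := by
      rw [Real.norm_eq_abs, hFz, abs_of_nonneg (hEnonneg z₀)] at hend
      linarith [hEnonneg z₀]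
    have hΦz₀ : 0 < Φ z₀ := hposlt z₀ hz₀pos.le hz₀lt
    have : Φ z₀ * Φ z₀ = 0 := by
      have h2 := mul_self_nonneg (deriv Φ z₀)
      simp only [hEdef] at hE0
      nlinarith [mul_self_nonneg (Φ z₀)]
    nlinarith
  · -- continuity of F on Icc
    intro x hx
    have hzx : 0 < z - x := by rcases hx with ⟨h1, h2⟩; simp only [hz₀def] at h2 ⊢; linarith
    have : ContinuousAt F x := by
      have hEc : ContinuousAt E (z - x) := by
        have := (hE (z - x) hzx).differentiableAt.continuousAt
        exact this
      exact hEc.comp ((continuous_const.sub continuous_id).continuousAt)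
    exact this.continuousWithinAt
  · -- derivative
    intro x hx
    have hzx : 0 < z - x := by
      rcases hx with ⟨h1, h2⟩; simp only [hz₀def] at h2 ⊢; linarith
    have hinner : HasDerivAt (fun t : ℝ => z - t) (-1) x := by
      simpa using (hasDerivAt_id x).const_sub z
    have houter : HasDerivAt E (Ed (z - x)) (z - x) := hE (z - x) hzx
    have := HasDerivAt.comp x houter hinner
    have h2 : HasDerivAt F (Ed (z - x) * (-1)) x := this
    simpa [mul_comm] using h2.hasDerivWithinAt
  · simp [hFdef, hEz]
  · -- the bound
    intro x hx
    have hx1 : z - x ∈ Set.Icc z₀ z := by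
      rcases hx with ⟨h1, h2⟩
      constructor <;> [linarith; linarith]
    have hzx : 0 < z - x := lt_of_lt_of_le hz₀pos hx1.1
    have hAb := hK (z - x) hx1
    rw [Real.norm_eq_abs] at hAb
    have hA0 : 0 < A (z - x) := hApos _ hzx
    set u := Φ (z - x); set v := deriv Φ (z - x); set a := A (z - x)
    have hEnn : (0:ℝ) ≤ u * u + v * v := add_nonneg (mul_self_nonneg u) (mul_self_nonneg v)
    have hEx : F x = u * u + v * v := by simp [hFdef, hEdef]; rfl
    rw [Real.norm_eq_abs, Real.norm_eq_abs, hEx, abs_of_nonneg hEnn]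
    have habs : |(-Ed (z - x))| = |2 * u * v * (1 + a)| := by
      rw [abs_neg]; congr 1; simp only [hEddef]; ring
    rw [habs, abs_mul]
    have h1 : |2 * u * v| ≤ u * u + v * v := by
      rw [abs_mul, abs_mul, abs_two]
      nlinarith [sq_nonneg (|u| - |v|), abs_nonneg u, abs_nonneg v, abs_mul_abs_self u,
        abs_mul_abs_self v]
    have h2 : |1 + a| ≤ 1 + K := by
      rw [abs_of_pos (by linarith)]
      have : a ≤ K := le_of_abs_le hAb
      linarith
    have h3 : (0:ℝ) ≤ 1 + K := by linarith
    calc |2 * u * v| * |1 + a| ≤ (u * u + v * v) * (1 + K) :=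
          mul_le_mul h1 h2 (abs_nonneg _) hEnn
      _ = (1 + K) * (u * u + v * v) := by ring
      _ ≤ 2 * (1 + K) * (u * u + v * v) + 0 := by linarith [mul_nonneg h3 hEnn]

set_option maxHeartbeats 1000000 in
lemma SL.facts {A Φ : ℝ → ℝ} {β m : ℝ} (hβ : -1 < β) (hm : 0 < m)
    (hA : ContinuousOn A (Set.Ioi 0)) (hApos : ∀ t > (0:ℝ), 0 < A t)
    (hAlow : ∀ t ≥ (1:ℝ), m * t ^ β ≤ A t)
    (h : IsSL A Φ) :
    (∀ t ≥ (0:ℝ), 0 < Φ t) ∧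
    AntitoneOn Φ (Set.Ici 0) ∧
    (∀ t > (0:ℝ), deriv Φ t ≤ 0) ∧
    MonotoneOn (deriv Φ) (Set.Ioi 0) ∧
    (∀ t > (1:ℝ), m * Φ t * ((t ^ (β+1) - 1)/(β+1)) ≤ 2) ∧
    (∀ t ≥ (2:ℝ), -Φ (t-1) ≤ deriv Φ t) := by
  have hpos := SL.pos hA hApos h
  obtain ⟨hcont, ⟨M, hM⟩, h0, hdiff, hode⟩ := h
  have hΦ' : ∀ t > (0:ℝ), HasDerivAt Φ (deriv Φ t) t := fun t ht => (hdiff t ht).hasDerivAt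
  have hmonoD : MonotoneOn (deriv Φ) (Set.Ioi 0) :=
    SL.monoDeriv hode (fun t ht => mul_nonneg (hApos t ht).le (hpos t ht.le).le)
  have hd0 : ∀ t > (0:ℝ), deriv Φ t ≤ 0 :=
    SL.derivNonpos hdiff hmonoD (fun t ht => le_of_abs_le (hM t ht))
  have hanti : AntitoneOn Φ (Set.Ici 0) := by
    apply antitoneOn_of_deriv_nonpos (convex_Ici 0) hcont
    · rw [interior_Ici]
      exact fun t ht => (hdiff t ht).differentiableWithinAt
    · rw [interior_Ici]; exact hd0
  have hΦle1 : ∀ t ≥ (0:ℝ), Φ t ≤ 1 := by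
    intro t ht
    have := hanti (Set.self_mem_Ici) (show t ∈ Set.Ici (0:ℝ) from ht) ht
    rwa [h0] at this
  have hslope2 : ∀ t ≥ (2:ℝ), -Φ (t-1) ≤ deriv Φ t := by
    intro t ht
    have h1 : (0:ℝ) < t - 1 := by linarith
    have := SL.slopeBound hdiff hmonoD h1 (show t - 1 < t by linarith)
    have hpt : 0 < Φ t := hpos t (by linarith)
    have hh : t - (t-1) = 1 := by ring
    rw [hh, mul_one] at this
    linarith
  have hD1 : -deriv Φ 1 ≤ 2 := by
    have := SL.slopeBound hdiff hmonoD (show (0:ℝ) < 1/2 by norm_num)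
      (show (1:ℝ)/2 < 1 by norm_num)
    have h1 : Φ (1/2) ≤ 1 := hΦle1 _ (by norm_num)
    have h2 : 0 < Φ 1 := hpos 1 (by norm_num)
    nlinarith
  refine ⟨hpos, hanti, hd0, hmonoD, ?_, hslope2⟩
  intro t ht
  have ht0 : (0:ℝ) < t := by linarith
  have hsub : Set.uIcc (1:ℝ) t ⊆ Set.Ioi 0 := by
    rw [Set.uIcc_of_le (by linarith)]
    intro x hx
    exact lt_of_lt_of_le one_pos hx.1
  have hΦc : ContinuousOn Φ (Set.uIcc 1 t) := fun x hx =>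
    ((hdiff x (hsub hx)).continuousAt).continuousWithinAt
  have hAΦcont : ContinuousOn (fun s => A s * Φ s) (Set.uIcc 1 t) := (hA.mono hsub).mul hΦc
  have hFTC : (∫ s in (1:ℝ)..t, A s * Φ s) = deriv Φ t - deriv Φ 1 :=
    intervalIntegral.integral_eq_sub_of_hasDerivAt
      (fun x hx => hode x (hsub hx)) (hAΦcont.intervalIntegrable)
  have hrpowc : ContinuousOn (fun s : ℝ => m * Φ t * s ^ β) (Set.uIcc 1 t) := by
    apply ContinuousOn.mul continuousOn_const
    intro x hx
    exact (Real.continuousAt_rpow_const x β (Or.inl (ne_of_gt (hsub hx)))).continuousWithinAt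
  have hmono : (∫ s in (1:ℝ)..t, m * Φ t * s ^ β) ≤ ∫ s in (1:ℝ)..t, A s * Φ s := by
    apply intervalIntegral.integral_mono_on (by linarith)
      (hrpowc.intervalIntegrable) (hAΦcont.intervalIntegrable)
    intro x hx
    have hx0 : (0:ℝ) < x := lt_of_lt_of_le one_pos hx.1
    have h1 : m * x ^ β ≤ A x := hAlow x hx.1
    have h2 : Φ t ≤ Φ x := hanti (show x ∈ Set.Ici (0:ℝ) from hx0.le)
      (show t ∈ Set.Ici (0:ℝ) from ht0.le) hx.2
    have h3 : 0 < Φ t := hpos t ht0.le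
    have h4 : (0:ℝ) < x ^ β := Real.rpow_pos_of_pos hx0 β
    have h5 : 0 < Φ x := hpos x hx0.le
    calc m * Φ t * x ^ β = (m * x ^ β) * Φ t := by ring
      _ ≤ (m * x ^ β) * Φ x := mul_le_mul_of_nonneg_left h2 (mul_nonneg hm.le h4.le)
      _ ≤ A x * Φ x := mul_le_mul_of_nonneg_right h1 h5.le
  have hval : (∫ s in (1:ℝ)..t, m * Φ t * s ^ β) = m * Φ t * ((t ^ (β+1) - 1)/(β+1)) := by
    rw [intervalIntegral.integral_const_mul, integral_rpow (Or.inl hβ), Real.one_rpow]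
  have hdt : deriv Φ t ≤ 0 := hd0 t ht0
  rw [hval] at hmono
  rw [hFTC] at hmono
  linarith

set_option maxHeartbeats 1000000 in
lemma SL.compare {A Φ Φ₀ : ℝ → ℝ} {β m c σ : ℝ} (hβ : -1 < β) (hm : 0 < m) (hc : 0 < c)
    (hσ : 0 < σ) (hσm : c * (σ * σ * σ ^ β) = m)
    (hA : ContinuousOn A (Set.Ioi 0)) (hApos : ∀ t > (0:ℝ), 0 < A t)
    (hAlow : ∀ t ≥ (1:ℝ), m * t ^ β ≤ A t)
    (h : IsSL A Φ) (h₀ : IsSL (fun u => c * u ^ β) Φ₀) :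
    ∀ t ≥ (1:ℝ), Φ t ≤ Φ₀ (σ * t) / Φ₀ σ := by
  have hA₀c : ContinuousOn (fun u : ℝ => c * u ^ β) (Set.Ioi 0) := by
    apply continuousOn_const.mul
    intro x hx
    exact (Real.continuousAt_rpow_const x β (Or.inl (ne_of_gt hx))).continuousWithinAt
  have hA₀pos : ∀ t > (0:ℝ), 0 < c * t ^ β :=
    fun t ht => mul_pos hc (Real.rpow_pos_of_pos ht β)
  obtain ⟨hpos, hanti, hd0, hmonoD, hdecay, hslope2⟩ :=
    SL.facts hβ hm hA hApos hAlow h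
  obtain ⟨hpos₀, hanti₀, hd0₀, hmonoD₀, hdecay₀, hslope2₀⟩ :=
    SL.facts hβ hc hA₀c hA₀pos (fun t _ => le_refl _) h₀
  obtain ⟨hcont, ⟨M, hM⟩, h0, hdiff, hode⟩ := h
  obtain ⟨hcont₀, ⟨M₀, hM₀⟩, h00, hdiff₀, hode₀⟩ := h₀
  have hΦ' : ∀ t > (0:ℝ), HasDerivAt Φ (deriv Φ t) t := fun t ht => (hdiff t ht).hasDerivAt
  have hΦ₀' : ∀ t > (0:ℝ), HasDerivAt Φ₀ (deriv Φ₀ t) t := fun t ht => (hdiff₀ t ht).hasDerivAt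
  have hβ1 : (0:ℝ) < β + 1 := by linarith
  -- decay bound
  set bnd : ℝ → ℝ := fun t => 2 * (β+1) / (m * (t ^ (β+1) - 1)) with hbnddef
  have hΦbnd : ∀ t > (1:ℝ), Φ t ≤ bnd t := by
    intro t ht
    have h1 : (1:ℝ) < t ^ (β+1) :=
      (Real.one_lt_rpow_iff_of_pos (by linarith)).mpr (Or.inl ⟨ht, hβ1⟩)
    have h2 : 0 < m * (t ^ (β+1) - 1) := mul_pos hm (by linarith)
    have h3 := hdecay t ht
    rw [hbnddef]
    rw [le_div_iff₀ h2]
    have : m * Φ t * ((t ^ (β+1) - 1)/(β+1)) = Φ t * (m * (t ^ (β+1) - 1)) / (β+1) := by ring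
    rw [this] at h3
    rw [div_le_iff₀ hβ1] at h3
    linarith
  have hbnd0 : Filter.Tendsto bnd Filter.atTop (nhds 0) := by
    have h1 : Filter.Tendsto (fun t : ℝ => m * (t ^ (β+1) - 1)) Filter.atTop Filter.atTop := by
      apply Filter.Tendsto.const_mul_atTop hm
      apply Filter.tendsto_atTop_add_const_right
      exact tendsto_rpow_atTop hβ1
    have h2 := h1.inv_tendsto_atTop
    have : bnd = fun t => 2 * (β+1) * (m * (t ^ (β+1) - 1))⁻¹ := by
      funext t; simp only [hbnddef, div_eq_mul_inv]
    rw [this]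
    simpa using h2.const_mul (2 * (β+1))
  -- the comparison function
  set Ψ : ℝ → ℝ := fun t => Φ₀ (σ * t) with hΨdef
  set Ψd : ℝ → ℝ := fun t => σ * deriv Φ₀ (σ * t) with hΨddef
  have hσt : ∀ t > (0:ℝ), 0 < σ * t := fun t ht => mul_pos hσ ht
  have hΨ : ∀ t > (0:ℝ), HasDerivAt Ψ (Ψd t) t := by
    intro t ht
    have hin : HasDerivAt (fun t : ℝ => σ * t) σ t := by
      simpa using (hasDerivAt_id t).const_mul σ
    have := HasDerivAt.comp t (hΦ₀' (σ * t) (hσt t ht)) hin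
    have e : Ψd t = deriv Φ₀ (σ * t) * σ := by simp only [hΨddef]; ring
    rw [e]; exact this
  have hΨd : ∀ t > (0:ℝ), HasDerivAt Ψd (m * t ^ β * Ψ t) t := by
    intro t ht
    have hin : HasDerivAt (fun t : ℝ => σ * t) σ t := by
      simpa using (hasDerivAt_id t).const_mul σ
    have hout := hode₀ (σ * t) (hσt t ht)
    have h2 := (HasDerivAt.comp t hout hin).const_mul σ
    have h3 : σ * (c * (σ * t) ^ β * Φ₀ (σ * t) * σ) = m * t ^ β * Ψ t := by
      rw [Real.mul_rpow hσ.le ht.le, ← hσm, hΨdef]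
      ring
    rwa [h3] at h2
  have hΨpos : ∀ t > (0:ℝ), 0 < Ψ t := fun t ht => hpos₀ (σ * t) (hσt t ht).le
  -- Wronskian
  set W : ℝ → ℝ := fun t => deriv Φ t * Ψ t - Φ t * Ψd t with hWdef
  have hW : ∀ t > (0:ℝ), HasDerivAt W ((A t - m * t ^ β) * (Φ t * Ψ t)) t := by
    intro t ht
    have h1 := ((hode t ht).mul (hΨ t ht)).sub ((hΦ' t ht).mul (hΨd t ht))
    have e : (A t - m * t ^ β) * (Φ t * Ψ t) = A t * Φ t * Ψ t + deriv Φ t * Ψd t -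
        (deriv Φ t * Ψd t + Φ t * (m * t ^ β * Ψ t)) := by ring
    rw [e]; exact h1
  have hWmono : MonotoneOn W (Set.Ici 1) := by
    apply monotoneOn_of_deriv_nonneg (convex_Ici 1)
    · exact fun x hx => ((hW x (lt_of_lt_of_le one_pos hx)).continuousAt).continuousWithinAt
    · rw [interior_Ici]
      exact fun x hx => ((hW x (lt_trans one_pos hx)).differentiableAt).differentiableWithinAt
    · rw [interior_Ici]
      intro x hx
      have hx0 : (0:ℝ) < x := lt_trans one_pos hx
      rw [(hW x hx0).deriv]
      have h1 : 0 ≤ A x - m * x ^ β := by linarith [hAlow x (le_of_lt hx)]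
      exact mul_nonneg h1 (mul_nonneg (hpos x hx0.le).le (hΨpos x hx0).le)
  set K₀ : ℝ := -deriv Φ₀ σ with hK₀def
  have hK₀ : 0 ≤ K₀ := by
    rw [hK₀def]
    linarith [hd0₀ σ hσ]
  have hΨdbd : ∀ t ≥ (1:ℝ), -Ψd t ≤ σ * K₀ := by
    intro t ht
    have h1 : deriv Φ₀ σ ≤ deriv Φ₀ (σ * t) := by
      apply hmonoD₀ (Set.mem_Ioi.mpr hσ) (Set.mem_Ioi.mpr (hσt t (lt_of_lt_of_le one_pos ht)))
      nlinarith
    simp only [hΨddef, hK₀def]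
    nlinarith [mul_le_mul_of_nonneg_left h1 hσ.le]
  have hWle : ∀ s ≥ (1:ℝ), W s ≤ 0 := by
    intro s hs
    have hev : ∀ᶠ t in Filter.atTop, W s ≤ bnd t * (σ * K₀) := by
      filter_upwards [Filter.eventually_ge_atTop (max s 2)] with t ht
      have hts : s ≤ t := le_trans (le_max_left _ _) ht
      have ht2 : (2:ℝ) ≤ t := le_trans (le_max_right _ _) ht
      have ht1 : (1:ℝ) < t := by linarith
      have ht0 : (0:ℝ) < t := by linarith
      have hWst : W s ≤ W t := hWmono hs (le_trans hs hts) hts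
      have h1 : deriv Φ t * Ψ t ≤ 0 :=
        mul_nonpos_of_nonpos_of_nonneg (hd0 t ht0) (hΨpos t ht0).le
      have h2 : -(Φ t * Ψd t) = Φ t * (-Ψd t) := by ring
      have h3 : Φ t * (-Ψd t) ≤ Φ t * (σ * K₀) :=
        mul_le_mul_of_nonneg_left (by linarith [hΨdbd t ht1.le]) (hpos t ht0.le).le
      have h4 : Φ t * (σ * K₀) ≤ bnd t * (σ * K₀) :=
        mul_le_mul_of_nonneg_right (hΦbnd t ht1) (mul_nonneg hσ.le hK₀)
      have : W t = deriv Φ t * Ψ t + (-(Φ t * Ψd t)) := by rw [hWdef]; ring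
      rw [this] at hWst
      rw [h2] at hWst
      linarith
    have hlim : Filter.Tendsto (fun t => bnd t * (σ * K₀)) Filter.atTop (nhds 0) := by
      simpa using hbnd0.mul_const (σ * K₀)
    exact ge_of_tendsto hlim hev
  -- q antitone
  set q : ℝ → ℝ := fun t => Φ t / Ψ t with hqdef
  have hq : ∀ t > (0:ℝ), HasDerivAt q ((deriv Φ t * Ψ t - Φ t * Ψd t) / (Ψ t)^2) t :=
    fun t ht => (hΦ' t ht).div (hΨ t ht) (ne_of_gt (hΨpos t ht))
  have hqanti : AntitoneOn q (Set.Ici 1) := by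
    apply antitoneOn_of_deriv_nonpos (convex_Ici 1)
    · exact fun x hx => ((hq x (lt_of_lt_of_le one_pos hx)).continuousAt).continuousWithinAt
    · rw [interior_Ici]
      exact fun x hx => ((hq x (lt_trans one_pos hx)).differentiableAt).differentiableWithinAt
    · rw [interior_Ici]
      intro x hx
      have hx0 : (0:ℝ) < x := lt_trans one_pos hx
      rw [(hq x hx0).deriv]
      apply div_nonpos_of_nonpos_of_nonneg
      · exact hWle x (le_of_lt hx)
      · positivity
  intro t ht
  have ht0 : (0:ℝ) < t := lt_of_lt_of_le one_pos ht
  have hqt : q t ≤ q 1 := hqanti (Set.self_mem_Ici) ht ht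
  have hΨ1 : 0 < Ψ 1 := hΨpos 1 one_pos
  have hΨt : 0 < Ψ t := hΨpos t ht0
  have hΦ1 : Φ 1 ≤ 1 := by
    have := hanti (Set.self_mem_Ici) (show (1:ℝ) ∈ Set.Ici (0:ℝ) by norm_num) (by norm_num)
    rwa [h0] at this
  rw [hqdef] at hqt
  simp only at hqt
  rw [div_le_div_iff₀ hΨt hΨ1] at hqt
  have hfinal : Φ t * Ψ 1 ≤ Ψ t := by
    calc Φ t * Ψ 1 ≤ Φ 1 * Ψ t := hqt
      _ ≤ 1 * Ψ t := mul_le_mul_of_nonneg_right hΦ1 hΨt.le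
      _ = Ψ t := one_mul _
  have hΨ1e : Ψ 1 = Φ₀ σ := by rw [hΨdef]; simp
  rw [le_div_iff₀ (show 0 < Φ₀ σ by rw [← hΨ1e]; exact hΨ1)]
  calc Φ t * Φ₀ σ = Φ t * Ψ 1 := by rw [hΨ1e]
    _ ≤ Ψ t := hfinal
    _ = Φ₀ (σ * t) := rfl

set_option maxHeartbeats 1000000 in
theorem phi_lambda_uniform_decay
    (β c C : ℝ) (hβ : -1 < β) (hc : 0 < c) (hC : 0 < C)
    (p : ℝ → ℝ) (hpc : ContinuousOn p (Set.Ioi 0)) (hppos : ∀ u > (0:ℝ), 0 < p u)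
    (hplim : Filter.Tendsto p Filter.atTop (nhds c))
    (hpbd₁ : β ≤ 0 → ∀ u > (0:ℝ), p u ≤ C)
    (hpbd₂ : 0 < β → ∀ u > (0:ℝ), p u ≤ C * (1 + u ^ (-β))) :
    let δ : ℝ := c⁻¹ * sInf (p '' Set.Ici 1)
    0 < δ ∧
    (∀ lam : ℝ, 0 < lam → lam ≤ 1 → ∀ t ≥ (1:ℝ),
      ∀ Φlam Φ₀ : ℝ → ℝ,
        IsSL (fun u => u ^ β * p (u * lam ^ (-(1 / (β + 2))))) Φlam →
        IsSL (fun u => c * u ^ β) Φ₀ →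
        Φlam t ≤ Φ₀ (δ ^ (1 / (β + 2)) * t) / Φ₀ (δ ^ (1 / (β + 2)))) ∧
    (∀ ε > (0:ℝ), ∃ T : ℝ, ∀ t ≥ T, ∀ lam : ℝ, 0 < lam → lam ≤ 1 →
      ∀ Φ : ℝ → ℝ, IsSL (fun u => u ^ β * p (u * lam ^ (-(1 / (β + 2))))) Φ →
        |Φ t| ≤ ε) := by
  intro δ
  have hβ2 : (0:ℝ) < β + 2 := by linarith
  set m := sInf (p '' Set.Ici 1) with hmdef
  -- m is a lower bound for p on [1, ∞) and is positive
  have hbddb : BddBelow (p '' Set.Ici 1) := by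
    refine ⟨0, ?_⟩
    rintro x ⟨u, hu, rfl⟩
    exact (hppos u (lt_of_lt_of_le one_pos hu)).le
  have hne : (p '' Set.Ici 1).Nonempty := ⟨p 1, 1, Set.self_mem_Ici, rfl⟩
  have hmle : ∀ v ≥ (1:ℝ), m ≤ p v := fun v hv => csInf_le hbddb ⟨v, hv, rfl⟩
  have hm : 0 < m := by
    have hev : ∀ᶠ u in Filter.atTop, c / 2 < p u :=
      hplim.eventually (eventually_gt_nhds (by linarith))
    obtain ⟨V, hV⟩ := Filter.eventually_atTop.mp hev
    set V' := max V 1 with hV'def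
    have hV'1 : (1:ℝ) ≤ V' := le_max_right _ _
    have hicc : Set.Icc (1:ℝ) V' ⊆ Set.Ioi 0 := fun x hx => lt_of_lt_of_le one_pos hx.1
    obtain ⟨u₀, hu₀, hmin⟩ := (isCompact_Icc (a := (1:ℝ)) (b := V')).exists_isMinOn
      ⟨1, le_refl _, hV'1⟩ (hpc.mono hicc)
    have hμ : 0 < p u₀ := hppos u₀ (hicc hu₀)
    have hlow : ∀ v ≥ (1:ℝ), min (p u₀) (c/2) ≤ p v := by
      intro v hv
      rcases le_or_gt v V' with h' | h'
      · exact le_trans (min_le_left _ _) (hmin ⟨hv, h'⟩)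
      · refine le_trans (min_le_right _ _) ?_
        exact (hV v (le_trans (le_max_left _ _) h'.le)).le
    have : 0 < min (p u₀) (c/2) := lt_min hμ (by linarith)
    refine lt_of_lt_of_le this (le_csInf hne ?_)
    rintro x ⟨v, hv, rfl⟩
    exact hlow v hv
  have hδ : 0 < δ := mul_pos (inv_pos.mpr hc) hm
  set σ : ℝ := δ ^ (1 / (β + 2)) with hσdef
  have hσpos : 0 < σ := Real.rpow_pos_of_pos hδ _
  have hσm : c * (σ * σ * σ ^ β) = m := by
    have h1 : σ * σ * σ ^ β = σ ^ ((2:ℝ) + β) := by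
      rw [Real.rpow_add hσpos]
      congr 1
      rw [show (2:ℝ) = ((2:ℕ):ℝ) by norm_num, Real.rpow_natCast]
      ring
    have h2 : σ ^ ((2:ℝ) + β) = δ ^ ((1 / (β + 2)) * (2 + β)) := by
      rw [hσdef, ← Real.rpow_mul hδ.le]
    have h3 : (1 / (β + 2)) * (2 + β) = 1 := by field_simp; ring
    rw [h1, h2, h3, Real.rpow_one]
    show c * (c⁻¹ * sInf (p '' Set.Ici 1)) = sInf (p '' Set.Ici 1)
    field_simp
  -- properties of A_lam
  have hAfacts : ∀ lam : ℝ, 0 < lam → lam ≤ 1 →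
      ContinuousOn (fun u : ℝ => u ^ β * p (u * lam ^ (-(1 / (β + 2))))) (Set.Ioi 0) ∧
      (∀ t > (0:ℝ), 0 < t ^ β * p (t * lam ^ (-(1 / (β + 2))))) ∧
      (∀ t ≥ (1:ℝ), m * t ^ β ≤ t ^ β * p (t * lam ^ (-(1 / (β + 2))))) := by
    intro lam hlam hlam1
    set L : ℝ := lam ^ (-(1 / (β + 2))) with hLdef
    have hL : 0 < L := Real.rpow_pos_of_pos hlam _
    have hL1 : 1 ≤ L := by
      rw [hLdef]
      apply Real.one_le_rpow_of_pos_of_le_one_of_nonpos hlam hlam1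
      rw [neg_nonpos]
      positivity
    refine ⟨?_, ?_, ?_⟩
    · apply ContinuousOn.mul
      · intro x hx
        exact (Real.continuousAt_rpow_const x β (Or.inl (ne_of_gt hx))).continuousWithinAt
      · exact hpc.comp ((continuous_id.mul continuous_const).continuousOn)
          (fun x hx => mul_pos hx hL)
    · intro t ht
      exact mul_pos (Real.rpow_pos_of_pos ht β) (hppos _ (mul_pos ht hL))
    · intro t ht
      have h1 : (1:ℝ) ≤ t * L := by nlinarith
      have h2 : m ≤ p (t * L) := hmle _ h1
      have h3 : (0:ℝ) < t ^ β := Real.rpow_pos_of_pos (lt_of_lt_of_le one_pos ht) β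
      calc m * t ^ β = t ^ β * m := by ring
        _ ≤ t ^ β * p (t * L) := mul_le_mul_of_nonneg_left h2 h3.le
  refine ⟨hδ, ?_, ?_⟩
  · -- comparison
    intro lam hlam hlam1 t ht Φlam Φ₀ hSL hSL₀
    obtain ⟨hAc, hApos, hAlow⟩ := hAfacts lam hlam hlam1
    exact SL.compare hβ hm hc hσpos hσm hAc hApos hAlow hSL hSL₀ t ht
  · -- uniform decay
    intro ε hε
    have hβ1 : (0:ℝ) < β + 1 := by linarith
    have h1 : Filter.Tendsto (fun t : ℝ => m * (t ^ (β+1) - 1) / (β+1))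
        Filter.atTop Filter.atTop := by
      apply Filter.Tendsto.atTop_div_const hβ1
      apply Filter.Tendsto.const_mul_atTop hm
      apply Filter.tendsto_atTop_add_const_right
      exact tendsto_rpow_atTop hβ1
    obtain ⟨T, hT⟩ := Filter.eventually_atTop.mp
      ((h1.eventually_ge_atTop (2 / ε)).and (Filter.eventually_ge_atTop 2))
    refine ⟨T, ?_⟩
    intro t htT lam hlam hlam1 Φ hSL
    obtain ⟨hAc, hApos, hAlow⟩ := hAfacts lam hlam hlam1
    obtain ⟨hpos, hanti, hd0, hmonoD, hdecay, hslope2⟩ :=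
      SL.facts hβ hm hAc hApos hAlow hSL
    obtain ⟨hJ, ht2⟩ := hT t htT
    have ht1 : (1:ℝ) < t := by linarith
    have hΦpos : 0 < Φ t := hpos t (by linarith)
    rw [abs_of_pos hΦpos]
    have h3 := hdecay t ht1
    have h4 : m * Φ t * ((t ^ (β+1) - 1)/(β+1)) = Φ t * (m * (t ^ (β+1) - 1) / (β+1)) := by
      ring
    rw [h4] at h3
    have h5 : (0:ℝ) < 2 / ε := by positivity
    have h6 : 0 < m * (t ^ (β+1) - 1) / (β+1) := lt_of_lt_of_le h5 hJ
    -- Φ t ≤ 2 / J ≤ 2 / (2/ε) = ε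
    have h7 : Φ t ≤ 2 / (m * (t ^ (β+1) - 1) / (β+1)) := by
      rw [le_div_iff₀ h6]; linarith
    calc Φ t ≤ 2 / (m * (t ^ (β+1) - 1) / (β+1)) := h7
      _ ≤ 2 / (2 / ε) := by
          apply div_le_div_of_nonneg_left (by norm_num) h5 hJ
      _ = ε := by field_simp
end
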